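/- arXiv:1511.04250 — 3 statements merged into one kernel-verified Lean document; each statement's English description precedes it below -/
import Mathlib

section
/- Let φ: ℝ² → ℝ be given by φ(x,y) = sin(2πx)·sin(2πy). Then for every w = (w₁,w₂) ∈ ℝ², the limit lim_{T→∞} ψ_T^0(w) exists and equals (|w₁| + |w₂|)², the square of the ℓ¹ norm of w. -/
open MeasureTheory Filter
open scoped ENNReal Topology

noncomputable section

abbrev Euc (n : ℕ) : Type := EuclideanSpace ℝ (Fin n)

/-- `u` is an `H¹` curve on `[a,b]` with (a.e.) derivative `u'`. -/
def IsH1On {n : ℕ} (u u' : ℝ → Euc n) (a b : ℝ) : Prop :=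
  IntervalIntegrable u' volume a b ∧
  IntervalIntegrable (fun t => ‖u' t‖ ^ 2) volume a b ∧
  ∀ t ∈ Set.Icc a b, u t = u a + ∫ s in a..t, u' s

/-- The localized homogenization energy `ψ_T^z(w)` (value `⊤` if no admissible curve exists). -/
def psiT {n : ℕ} {α : Type*} (φ : Euc n → α) (z : α) (T : ℝ) (w : Euc n) : ℝ≥0∞ :=
  ENNReal.ofReal (1 / T) *
    sInf {e : ℝ≥0∞ | ∃ u u' : ℝ → Euc n, IsH1On u u' 0 T ∧
      (∀ t ∈ Set.Icc (0 : ℝ) T, φ (u t) = z) ∧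
      ‖u 0‖ ≤ Real.sqrt (n : ℝ) ∧ ‖u T - T • w‖ ≤ Real.sqrt (n : ℝ) ∧
      e = ENNReal.ofReal (∫ t in (0 : ℝ)..T, ‖u' t‖ ^ 2)}

namespace SinGridAux

open Set Metric Real intervalIntegral

lemma euc2_norm_sq (p : Euc 2) : ‖p‖ ^ 2 = (p 0) ^ 2 + (p 1) ^ 2 := by
  rw [EuclideanSpace.norm_eq, Real.sq_sqrt (by positivity)]
  simp [Fin.sum_univ_two, sq_abs]

lemma abs_coord_le (p : Euc 2) (i : Fin 2) : |p i| ≤ ‖p‖ := by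
  have h := euc2_norm_sq p
  fin_cases i
  · show |p 0| ≤ ‖p‖
    nlinarith [norm_nonneg p, abs_nonneg (p 0), sq_abs (p 0), sq_nonneg (p 1)]
  · show |p 1| ≤ ‖p‖
    nlinarith [norm_nonneg p, abs_nonneg (p 1), sq_abs (p 1), sq_nonneg (p 0)]

lemma norm_le_abs_add (p : Euc 2) : ‖p‖ ≤ |p 0| + |p 1| := by
  have h := euc2_norm_sq p
  nlinarith [norm_nonneg p, abs_nonneg (p 0), abs_nonneg (p 1), sq_abs (p 0), sq_abs (p 1),
    mul_nonneg (abs_nonneg (p 0)) (abs_nonneg (p 1))]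

lemma sin_two_pi_half_int (k : ℤ) : Real.sin (2 * π * ((k : ℝ) / 2)) = 0 := by
  have : 2 * π * ((k : ℝ) / 2) = (k : ℝ) * π := by ring
  rw [this]; exact Real.sin_int_mul_pi k

lemma eq_of_close {a b : ℝ} (ha : Real.sin (2 * π * a) = 0) (hb : Real.sin (2 * π * b) = 0)
    (h : |a - b| < 1 / 2) : a = b := by
  rw [Real.sin_eq_zero_iff] at ha hb
  obtain ⟨m, hm⟩ := ha; obtain ⟨n, hn⟩ := hb
  have hπ := Real.pi_ne_zero
  have ham : a = (m : ℝ) / 2 := by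
    have h2 : (m : ℝ) * π = (2 * a) * π := by linarith [hm]
    have := mul_right_cancel₀ hπ h2
    linarith
  have hbn : b = (n : ℝ) / 2 := by
    have h2 : (n : ℝ) * π = (2 * b) * π := by linarith [hn]
    have := mul_right_cancel₀ hπ h2
    linarith
  rw [ham, hbn] at h ⊢
  have hmn : |(m : ℝ) - n| < 1 := by
    rw [abs_lt] at h ⊢; constructor <;> nlinarith [h.1, h.2]
  have : m = n := by
    have h1 : ((m - n : ℤ) : ℝ) < 1 := by push_cast; linarith [abs_lt.1 hmn]
    have h2 : (-1 : ℝ) < ((m - n : ℤ) : ℝ) := by push_cast; linarith [abs_lt.1 hmn]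
    have h1' : (m - n : ℤ) < 1 := by exact_mod_cast h1
    have h2' : (-1 : ℤ) < (m - n : ℤ) := by exact_mod_cast h2
    omega
  rw [this]

lemma sign_mul_abs (r : ℝ) : Real.sign r * |r| = r := by
  rcases lt_trichotomy r 0 with h | h | h
  · rw [Real.sign_of_neg h, abs_of_neg h]; ring
  · simp [h]
  · rw [Real.sign_of_pos h, abs_of_pos h]; ring

lemma sign_sq_le_one (r : ℝ) : (Real.sign r) ^ 2 ≤ 1 := by
  rcases Real.sign_apply_eq r with h | h | h <;> rw [h] <;> norm_num


lemma ae_zero_on_flat {f : ℝ → ℝ} (hf : Integrable f volume) {A : Set ℝ}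
    (hm : MeasurableSet A)
    (hA : ∀ t ∈ A, ∃ δ > 0, ∀ s ∈ A, |s - t| < δ → (∫ r in t..s, f r) = 0) :
    ∀ᵐ t ∂(volume.restrict A), f t = 0 := by
  have hleb := (Besicovitch.vitaliFamily (volume : Measure ℝ)).ae_tendsto_average_norm_sub
      hf.locallyIntegrable
  filter_upwards [Besicovitch.ae_tendsto_measure_inter_div volume A,
    ae_restrict_of_ae hleb, ae_restrict_mem hm] with t hdens hleb' htA
  have hlebt : Tendsto (fun r => ⨍ y in closedBall t r, ‖f y - f t‖) (𝓝[>] 0) (𝓝 0) :=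
    hleb'.comp (Besicovitch.tendsto_filterAt volume t)
  obtain ⟨δ, δpos, hδ⟩ := hA t htA
  -- for all small r > 0, there is a point of A in (t, t+r]
  have hpos : ∀ᶠ r in 𝓝[>] (0 : ℝ), (A ∩ Ioc t (t + r)).Nonempty := by
    have h34 : ∀ᶠ r in 𝓝[>] (0 : ℝ),
        ENNReal.ofReal (3 / 4) < volume (A ∩ closedBall t r) / volume (closedBall t r) :=
      hdens.eventually (eventually_gt_nhds (ENNReal.ofReal_lt_one.mpr (by norm_num)))
    filter_upwards [h34, self_mem_nhdsWithin] with r hr hr0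
    replace hr0 : (0 : ℝ) < r := hr0
    by_contra hemp
    rw [Set.not_nonempty_iff_eq_empty] at hemp
    have hsub : A ∩ closedBall t r ⊆ Icc (t - r) t := by
      intro x ⟨hxA, hxB⟩
      rw [Real.closedBall_eq_Icc] at hxB
      rcases le_or_gt x t with h | h
      · exact ⟨hxB.1, h⟩
      · exfalso
        have hx : x ∈ A ∩ Ioc t (t + r) := ⟨hxA, h, hxB.2⟩
        rw [hemp] at hx
        exact Set.notMem_empty x hx
    have hle : volume (A ∩ closedBall t r) ≤ ENNReal.ofReal r := by
      calc volume (A ∩ closedBall t r) ≤ volume (Icc (t - r) t) := measure_mono hsub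
        _ = ENNReal.ofReal r := by rw [Real.volume_Icc]; congr 1; ring
    rw [Real.volume_closedBall] at hr
    have hlt : ENNReal.ofReal (3 / 4) < ENNReal.ofReal r / ENNReal.ofReal (2 * r) :=
      lt_of_lt_of_le hr (ENNReal.div_le_div_right hle _)
    rw [← ENNReal.ofReal_div_of_pos (by positivity)] at hlt
    have h12 : r / (2 * r) = 1 / 2 := by field_simp
    rw [h12, ENNReal.ofReal_lt_ofReal_iff (by norm_num)] at hlt
    linarith
  obtain ⟨ε, εpos, hε⟩ : ∃ ε > 0, ∀ r : ℝ, 0 < r → r < ε → (A ∩ Ioc t (t + r)).Nonempty := by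
    rw [eventually_nhdsWithin_iff, Metric.eventually_nhds_iff] at hpos
    obtain ⟨ε, εpos, hε⟩ := hpos
    exact ⟨ε, εpos, fun r hr0 hrε => hε (by simpa [Real.dist_eq, abs_of_pos hr0] using hrε) hr0⟩
  -- build a sequence of points of A approaching t from the right
  have hsel : ∀ n : ℕ, ∃ s ∈ A, t < s ∧ s - t ≤ min ε δ / (2 * (n + 1)) := by
    intro n
    have hq : (0 : ℝ) < min ε δ / (2 * (n + 1)) := by positivity
    have hmin : (0 : ℝ) < min ε δ := lt_min εpos δpos
    have hcast : (1 : ℝ) ≤ (n : ℝ) + 1 := by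
      have : (0 : ℝ) ≤ (n : ℝ) := Nat.cast_nonneg n
      linarith
    have h1 : min ε δ / (2 * (n + 1)) ≤ min ε δ / 2 :=
      div_le_div_of_nonneg_left hmin.le (by norm_num) (by linarith)
    have h2 : min ε δ / 2 < min ε δ := half_lt_self hmin
    have hlt : min ε δ / (2 * (n + 1)) < ε :=
      lt_of_le_of_lt h1 (lt_of_lt_of_le h2 (min_le_left _ _))
    obtain ⟨s, hsA, hs⟩ := hε _ hq hlt
    exact ⟨s, hsA, hs.1, by linarith [hs.2]⟩
  choose s hsA hst hsle using hsel
  set h : ℕ → ℝ := fun n => s n - t with hh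
  have hh0 : ∀ n, 0 < h n := fun n => sub_pos.mpr (hst n)
  have hmin : (0 : ℝ) < min ε δ := lt_min εpos δpos
  have hhδ : ∀ n, h n < δ := by
    intro n
    have h1 : min ε δ / (2 * (n + 1)) ≤ min ε δ / 2 := by
      apply div_le_div_of_nonneg_left hmin.le (by norm_num)
      have : (0 : ℝ) ≤ (n : ℝ) := Nat.cast_nonneg n
      linarith
    have h2 : min ε δ / 2 < min ε δ := half_lt_self hmin
    calc h n ≤ min ε δ / (2 * (n + 1)) := hsle n
      _ ≤ min ε δ / 2 := h1
      _ < min ε δ := h2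
      _ ≤ δ := min_le_right _ _
  have htends : Tendsto h atTop (𝓝[>] (0 : ℝ)) := by
    rw [tendsto_nhdsWithin_iff]
    constructor
    · apply squeeze_zero (fun n => (hh0 n).le) hsle
      have hb : Tendsto (fun n : ℕ => min ε δ / 2 * (1 / ((n : ℝ) + 1))) atTop (𝓝 0) := by
        have := tendsto_one_div_add_atTop_nhds_zero_nat.const_mul (min ε δ / 2)
        simpa using this
      apply hb.congr
      intro n
      field_simp
    · exact Eventually.of_forall (fun n => Set.mem_Ioi.mpr (hh0 n))
  have hlebn : Tendsto (fun n => ⨍ y in closedBall t (h n), ‖f y - f t‖) atTop (𝓝 0) :=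
    hlebt.comp htends
  have key : ∀ n, |f t| ≤ 2 * ⨍ y in closedBall t (h n), ‖f y - f t‖ := by
    intro n
    have hb : t ≤ s n := (hst n).le
    have hint0 : (∫ r in t..s n, f r) = 0 := by
      apply hδ (s n) (hsA n)
      rw [abs_of_pos (hh0 n)]
      exact hhδ n
    have hfi : IntervalIntegrable f volume t (s n) := hf.intervalIntegrable
    have hci : IntervalIntegrable (fun _ => f t) volume t (s n) := intervalIntegrable_const
    have hsub : (∫ r in t..s n, (f r - f t)) = -((s n - t) * f t) := by
      rw [intervalIntegral.integral_sub hfi hci, hint0, intervalIntegral.integral_const]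
      simp [smul_eq_mul]
    have hIint : IntegrableOn (fun r => ‖f r - f t‖) (closedBall t (h n)) volume := by
      apply Integrable.norm
      exact (hf.integrableOn).sub (integrableOn_const measure_closedBall_lt_top.ne)
    have hIoc : (∫ r in Ioc t (s n), ‖f r - f t‖) ≤ ∫ r in closedBall t (h n), ‖f r - f t‖ := by
      apply setIntegral_mono_set hIint (Eventually.of_forall (fun x => norm_nonneg _))
      apply HasSubset.Subset.eventuallyLE
      rw [Real.closedBall_eq_Icc]
      intro x hx
      constructor
      · have := hh0 n; have := hx.1; simp only [Set.mem_Ioc] at *; linarith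
      · have := hx.2; simp only [Set.mem_Ioc] at hx; have : x ≤ s n := hx.2; simp only [hh]; linarith
    have habs : h n * |f t| ≤ ∫ r in closedBall t (h n), ‖f r - f t‖ := by
      have h1 : ‖∫ r in t..s n, (f r - f t)‖ = h n * |f t| := by
        rw [hsub, norm_neg, Real.norm_eq_abs, abs_mul, abs_of_pos (hh0 n)]
      rw [← h1]
      calc ‖∫ r in t..s n, (f r - f t)‖ ≤ ∫ r in Ioc t (s n), ‖f r - f t‖ := by
            rw [intervalIntegral.integral_of_le hb]
            exact norm_integral_le_integral_norm _
        _ ≤ _ := hIoc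
    have hvol : (volume (closedBall t (h n))).toReal = 2 * h n := by
      rw [Real.volume_closedBall, ENNReal.toReal_ofReal (by linarith [hh0 n])]
    have hnpos := hh0 n
    rw [setAverage_eq, measureReal_def, hvol, smul_eq_mul]
    rw [show (2 : ℝ) * ((2 * h n)⁻¹ * ∫ r in closedBall t (h n), ‖f r - f t‖)
        = (∫ r in closedBall t (h n), ‖f r - f t‖) / h n from by field_simp]
    rw [le_div_iff₀ hnpos]
    linarith [habs]
  have hfin : |f t| ≤ 2 * 0 := ge_of_tendsto (hlebn.const_mul 2) (Eventually.of_forall key)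
  have := abs_nonneg (f t)
  have : |f t| = 0 := le_antisymm (by linarith) this
  exact abs_eq_zero.mp this

lemma lower_energy {T : ℝ} (hT : 0 < T) {u u' : ℝ → Euc 2}
    (h1 : IntervalIntegrable u' volume 0 T)
    (h3 : ∀ t ∈ Set.Icc (0 : ℝ) T, u t = u 0 + ∫ s in (0 : ℝ)..t, u' s)
    (hφ : ∀ t ∈ Set.Icc (0 : ℝ) T,
      Real.sin (2 * π * u t 0) * Real.sin (2 * π * u t 1) = 0) :
    |u T 0 - u 0 0| + |u T 1 - u 0 1| ≤ ∫ t in (0 : ℝ)..T, ‖u' t‖ := by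
  have hTle : (0 : ℝ) ≤ T := hT.le
  have hIoc : IntegrableOn u' (Ioc 0 T) volume := by
    rw [intervalIntegrable_iff, Set.uIoc_of_le hTle] at h1
    exact h1
  set F : ℝ → Euc 2 := (Ioc (0 : ℝ) T).indicator u' with hFdef
  have hFint : Integrable F volume := (integrable_indicator_iff measurableSet_Ioc).2 hIoc
  have hFeq : ∀ {a b : ℝ}, 0 ≤ a → b ≤ T → a ≤ b →
      (∫ s in a..b, F s) = ∫ s in a..b, u' s := by
    intro a b ha hb hab
    apply intervalIntegral.integral_congr_ae
    rw [Set.uIoc_of_le hab]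
    apply Eventually.of_forall
    intro x hx
    have hx' : x ∈ Ioc (0 : ℝ) T := ⟨lt_of_le_of_lt ha hx.1, le_trans hx.2 hb⟩
    exact Set.indicator_of_mem hx' u'
  set v : ℝ → Euc 2 := fun t => u 0 + ∫ s in (0 : ℝ)..t, F s with hvdef
  have hvc : Continuous v := continuous_const.add (hFint.continuous_primitive 0)
  have hvu : ∀ t ∈ Icc (0 : ℝ) T, v t = u t := by
    intro t ht
    rw [h3 t ht]
    simp only [hvdef]
    rw [hFeq (le_refl 0) ht.2 ht.1]
  have hvdiff : ∀ a b : ℝ, (∫ s in a..b, F s) = v b - v a := by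
    intro a b
    simp only [hvdef]
    rw [add_sub_add_left_eq_sub,
      ← intervalIntegral.integral_interval_sub_left
        (hFint.intervalIntegrable : IntervalIntegrable F volume 0 b)
        (hFint.intervalIntegrable : IntervalIntegrable F volume 0 a)]
  have hproj : ∀ i : Fin 2, Integrable (fun t => F t i) volume := fun i =>
    (EuclideanSpace.proj i : Euc 2 →L[ℝ] ℝ).integrable_comp hFint
  have hccoord : ∀ i : Fin 2, Continuous fun s => v s i := fun i =>
    ((EuclideanSpace.proj i : Euc 2 →L[ℝ] ℝ).continuous).comp hvc
  -- the flat sets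
  have hAm : ∀ i : Fin 2, MeasurableSet (Icc 0 T ∩ {t : ℝ | Real.sin (2 * π * v t i) = 0}) := by
    intro i
    apply measurableSet_Icc.inter
    have hc : Continuous fun t => Real.sin (2 * π * v t i) :=
      Real.continuous_sin.comp (continuous_const.mul (hccoord i))
    exact (isClosed_singleton.preimage hc).measurableSet
  have hflat : ∀ i : Fin 2, ∀ᵐ t,
      t ∈ Icc 0 T ∩ {t : ℝ | Real.sin (2 * π * v t i) = 0} → F t i = 0 := by
    intro i
    rw [← ae_restrict_iff' (hAm i)]
    apply ae_zero_on_flat (hproj i) (hAm i)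
    intro t htA
    obtain ⟨δ, δpos, hδ⟩ := Metric.continuous_iff.mp (hccoord i) t (1 / 2) (by norm_num)
    refine ⟨δ, δpos, fun s hsA hst => ?_⟩
    have hvv : v s i = v t i := by
      apply eq_of_close hsA.2 htA.2
      have := hδ s (by rw [Real.dist_eq]; exact hst)
      rwa [Real.dist_eq] at this
    have hcomm := ContinuousLinearMap.intervalIntegral_comp_comm
      (EuclideanSpace.proj i : Euc 2 →L[ℝ] ℝ)
      (hFint.intervalIntegrable : IntervalIntegrable F volume t s)
    calc (∫ r in t..s, F r i) = (EuclideanSpace.proj i : Euc 2 →L[ℝ] ℝ) (∫ r in t..s, F r) :=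
          hcomm
      _ = (v s - v t) i := by rw [hvdiff]; rfl
      _ = 0 := by simp [hvv]
  -- pointwise bound
  have hae : ∀ᵐ t, t ∈ Ioc (0 : ℝ) T → |F t 0| + |F t 1| ≤ ‖F t‖ := by
    filter_upwards [hflat 0, hflat 1] with t h0t h1t htIoc
    have htIcc : t ∈ Icc (0 : ℝ) T := ⟨htIoc.1.le, htIoc.2⟩
    have hcov := hφ t htIcc
    rw [← hvu t htIcc] at hcov
    rcases mul_eq_zero.mp hcov with hz | hz
    · rw [h0t ⟨htIcc, hz⟩, abs_zero, zero_add]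
      exact abs_coord_le (F t) 1
    · rw [h1t ⟨htIcc, hz⟩, abs_zero, add_zero]
      exact abs_coord_le (F t) 0
  have hstep1 : (∫ t in Ioc (0 : ℝ) T, (|F t 0| + |F t 1|)) ≤ ∫ t in Ioc (0 : ℝ) T, ‖F t‖ := by
    apply integral_mono_ae (((hproj 0).abs.add ((hproj 1).abs)).integrableOn)
      (hFint.norm.integrableOn)
    exact (ae_restrict_iff' measurableSet_Ioc).mpr hae
  have hsplit : (∫ t in Ioc (0 : ℝ) T, (|F t 0| + |F t 1|)) =
      (∫ t in Ioc (0 : ℝ) T, |F t 0|) + ∫ t in Ioc (0 : ℝ) T, |F t 1| :=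
    integral_add ((hproj 0).abs.integrableOn) ((hproj 1).abs.integrableOn)
  have hcoord : ∀ i : Fin 2, (∫ t in Ioc (0 : ℝ) T, F t i) = u T i - u 0 i := by
    intro i
    rw [← intervalIntegral.integral_of_le hTle]
    have hcomm := ContinuousLinearMap.intervalIntegral_comp_comm
      (EuclideanSpace.proj i : Euc 2 →L[ℝ] ℝ)
      (hFint.intervalIntegrable : IntervalIntegrable F volume 0 T)
    rw [show (∫ t in (0 : ℝ)..T, F t i) =
        (EuclideanSpace.proj i : Euc 2 →L[ℝ] ℝ) (∫ t in (0 : ℝ)..T, F t) from hcomm,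
      hvdiff 0 T, hvu 0 ⟨le_refl 0, hTle⟩, hvu T ⟨hTle, le_refl T⟩]
    rfl
  have habsc : ∀ i : Fin 2, |u T i - u 0 i| ≤ ∫ t in Ioc (0 : ℝ) T, |F t i| := by
    intro i
    rw [← hcoord i, ← Real.norm_eq_abs]
    refine le_trans (norm_integral_le_integral_norm _) ?_
    simp [Real.norm_eq_abs]
  have hlast : (∫ t in (0 : ℝ)..T, ‖u' t‖) = ∫ t in Ioc (0 : ℝ) T, ‖F t‖ := by
    rw [intervalIntegral.integral_of_le hTle]
    apply setIntegral_congr_fun measurableSet_Ioc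
    intro x hx
    simp [hFdef, Set.indicator_of_mem hx]
  rw [hlast]
  calc |u T 0 - u 0 0| + |u T 1 - u 0 1|
      ≤ (∫ t in Ioc (0 : ℝ) T, |F t 0|) + ∫ t in Ioc (0 : ℝ) T, |F t 1| :=
        add_le_add (habsc 0) (habsc 1)
    _ = ∫ t in Ioc (0 : ℝ) T, (|F t 0| + |F t 1|) := hsplit.symm
    _ ≤ _ := hstep1

lemma sq_integral_norm_le {T : ℝ} (hT : 0 < T) {f : ℝ → Euc 2}
    (h1 : IntervalIntegrable f volume 0 T)
    (h2 : IntervalIntegrable (fun t => ‖f t‖ ^ 2) volume 0 T) :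
    (∫ t in (0 : ℝ)..T, ‖f t‖) ^ 2 ≤ T * ∫ t in (0 : ℝ)..T, ‖f t‖ ^ 2 := by
  set S := ∫ t in (0 : ℝ)..T, ‖f t‖ with hSdef
  set E := ∫ t in (0 : ℝ)..T, ‖f t‖ ^ 2 with hEdef
  have hSnn : 0 ≤ S := intervalIntegral.integral_nonneg hT.le (fun t _ => norm_nonneg _)
  have hEnn : 0 ≤ E := intervalIntegral.integral_nonneg hT.le (fun t _ => sq_nonneg _)
  rcases eq_or_lt_of_le hSnn with hS0 | hSpos
  · nlinarith
  · set lam := S / T with hlam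
    have hlampos : 0 < lam := div_pos hSpos hT
    have h2l : (0 : ℝ) < 2 * lam := by linarith
    have hpt : ∀ t ∈ Set.Icc (0 : ℝ) T, ‖f t‖ ≤ ‖f t‖ ^ 2 / (2 * lam) + lam / 2 := by
      intro t _
      have hsq := sq_nonneg (‖f t‖ - lam)
      have key : 2 * lam * ‖f t‖ ≤ ‖f t‖ ^ 2 + lam ^ 2 := by nlinarith
      calc ‖f t‖ = (2 * lam * ‖f t‖) / (2 * lam) := by field_simp
        _ ≤ (‖f t‖ ^ 2 + lam ^ 2) / (2 * lam) := by
            exact div_le_div_of_nonneg_right key h2l.le |>.trans_eq rfl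
        _ = ‖f t‖ ^ 2 / (2 * lam) + lam / 2 := by field_simp
    have hint : (∫ t in (0 : ℝ)..T, (‖f t‖ ^ 2 / (2 * lam) + lam / 2)) =
        E / (2 * lam) + (lam / 2) * T := by
      rw [intervalIntegral.integral_add (h2.div_const _) intervalIntegrable_const,
        intervalIntegral.integral_div, intervalIntegral.integral_const]
      simp [smul_eq_mul]
      ring
    have hmono : S ≤ E / (2 * lam) + (lam / 2) * T := by
      rw [← hint]
      exact intervalIntegral.integral_mono_on hT.le h1.norm
        ((h2.div_const _).add intervalIntegrable_const) hpt
    have h2S : (0 : ℝ) < 2 * S := by linarith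
    have heq1 : E / (2 * lam) = E * T / (2 * S) := by
      rw [hlam]; field_simp
    have heq2 : (lam / 2) * T = S / 2 := by
      rw [hlam]; field_simp
    rw [heq1, heq2] at hmono
    have hhalf : S / 2 ≤ E * T / (2 * S) := by linarith
    have := (le_div_iff₀ h2S).mp hhalf
    nlinarith

lemma ae_ne_pt (τ : ℝ) : ∀ᵐ x : ℝ, x ≠ τ := by
  rw [ae_iff]
  simp only [ne_eq, not_not, Set.setOf_eq_eq_singleton]
  exact measure_singleton τ

lemma ite_intervalIntegrable {E : Type*} [NormedAddCommGroup E] (τ : ℝ) (C₁ C₂ : E) (a b : ℝ) :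
    IntervalIntegrable (fun t => if t < τ then C₁ else C₂) volume a b := by
  rw [intervalIntegrable_iff]
  have hsm : StronglyMeasurable (fun t : ℝ => if t < τ then C₁ else C₂) := by
    have heq : (fun t : ℝ => if t < τ then C₁ else C₂) =
        (Iio τ).piecewise (fun _ => C₁) fun _ => C₂ := by
      funext t
      by_cases h : t < τ <;> simp [Set.piecewise, Set.mem_Iio, h]
    rw [heq]
    exact stronglyMeasurable_const.piecewise measurableSet_Iio stronglyMeasurable_const
  apply Integrable.mono' (g := fun _ => max ‖C₁‖ ‖C₂‖)
  · exact integrableOn_const measure_Ioc_lt_top.ne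
  · exact hsm.aestronglyMeasurable
  · apply Eventually.of_forall
    intro t
    by_cases h : t < τ <;> simp [h, le_max_left, le_max_right]

lemma ite_integral_left {E : Type*} [NormedAddCommGroup E] [NormedSpace ℝ E] [CompleteSpace E] {τ a b : ℝ}
    (C₁ C₂ : E) (hab : a ≤ b) (hbτ : b ≤ τ) :
    (∫ t in a..b, if t < τ then C₁ else C₂) = (b - a) • C₁ := by
  have h : (∫ t in a..b, if t < τ then C₁ else C₂) = ∫ _t in a..b, C₁ := by
    apply intervalIntegral.integral_congr_ae
    rw [Set.uIoc_of_le hab]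
    filter_upwards [ae_ne_pt τ] with x hx hmem
    have : x < τ := lt_of_le_of_ne (le_trans hmem.2 hbτ) hx
    simp [this]
  rw [h, intervalIntegral.integral_const]

lemma ite_integral_right {E : Type*} [NormedAddCommGroup E] [NormedSpace ℝ E] [CompleteSpace E] {τ a b : ℝ}
    (C₁ C₂ : E) (hτa : τ ≤ a) (hab : a ≤ b) :
    (∫ t in a..b, if t < τ then C₁ else C₂) = (b - a) • C₂ := by
  have h : (∫ t in a..b, if t < τ then C₁ else C₂) = ∫ _t in a..b, C₂ := by
    apply intervalIntegral.integral_congr_ae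
    rw [Set.uIoc_of_le hab]
    filter_upwards [] with x hmem
    have : ¬ x < τ := not_lt.mpr (le_trans hτa hmem.1.le)
    simp [this]
  rw [h, intervalIntegral.integral_const]

lemma euc2_ext {p q : Euc 2} (h0 : p 0 = q 0) (h1 : p 1 = q 1) : p = q := by
  ext j
  fin_cases j
  · exact h0
  · exact h1

set_option maxHeartbeats 1000000 in
lemma exists_path {T : ℝ} (hT : 0 < T) (w : Euc 2) :
    ∃ u u' : ℝ → Euc 2,
      (IntervalIntegrable u' volume 0 T ∧
        IntervalIntegrable (fun t => ‖u' t‖ ^ 2) volume 0 T ∧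
        ∀ t ∈ Set.Icc (0 : ℝ) T, u t = u 0 + ∫ s in (0 : ℝ)..t, u' s) ∧
      (∀ t ∈ Set.Icc (0 : ℝ) T,
        Real.sin (2 * π * u t 0) * Real.sin (2 * π * u t 1) = 0) ∧
      ‖u 0‖ ≤ Real.sqrt 2 ∧ ‖u T - T • w‖ ≤ Real.sqrt 2 ∧
      (∫ t in (0 : ℝ)..T, ‖u' t‖ ^ 2) ≤ (T * |w 0| + 1 / 4 + T * |w 1|) ^ 2 / T := by
  have hTne : T ≠ 0 := hT.ne'
  set c : ℝ := T * w 0 with hc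
  set b : ℝ := T * w 1 with hb
  set k : ℤ := round (2 * c) with hk
  set xs : ℝ := (k : ℝ) / 2 with hxs
  have hxsc : |xs - c| ≤ 1 / 4 := by
    have h := abs_sub_round (2 * c)
    have heq : xs - c = -((2 * c - (k : ℝ)) / 2) := by rw [hxs]; ring
    rw [heq, abs_neg, abs_div]
    rw [hk]
    calc |2 * c - (round (2*c) : ℝ)| / |2| ≤ (1/2) / |2| := by
          apply div_le_div_of_nonneg_right h (by norm_num) |>.trans_eq rfl
      _ = 1 / 4 := by norm_num
  set L1 : ℝ := |xs| with hL1
  set L2 : ℝ := |b| with hL2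
  set L : ℝ := L1 + L2 with hL
  have hL1nn : 0 ≤ L1 := abs_nonneg _
  have hL2nn : 0 ≤ L2 := abs_nonneg _
  have hLnn : 0 ≤ L := add_nonneg hL1nn hL2nn
  set τ : ℝ := T * L1 / L with hτ
  have hτnn : 0 ≤ τ := div_nonneg (mul_nonneg hT.le hL1nn) hLnn
  have hτT : τ ≤ T := by
    rcases eq_or_lt_of_le hLnn with h0 | hpos
    · rw [hτ, ← h0, div_zero]; exact hT.le
    · rw [hτ, div_le_iff₀ hpos]; nlinarith
  have hTLT : T * (L / T) = L := by field_simp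
  have hτL : τ * (L / T) = L1 := by
    rcases eq_or_lt_of_le hLnn with h0 | hpos
    · have hL10 : L1 = 0 := by rw [hL] at h0; linarith
      rw [hτ, hL10, ← h0]
      simp
    · rw [hτ]; field_simp
  have hτL2 : (T - τ) * (L / T) = L2 := by
    have hexp : (T - τ) * (L / T) = T * (L / T) - τ * (L / T) := by ring
    rw [hexp, hTLT, hτL, hL]; ring
  set C₁ : Euc 2 := EuclideanSpace.single 0 (Real.sign xs * (L / T)) with hC₁
  set C₂ : Euc 2 := EuclideanSpace.single 1 (Real.sign b * (L / T)) with hC₂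
  set g : ℝ → Euc 2 := fun t => if t < τ then C₁ else C₂ with hg
  set U : ℝ → Euc 2 := fun t =>
    if t ≤ τ then EuclideanSpace.single 0 (Real.sign xs * (L / T) * t)
    else EuclideanSpace.single 0 xs + EuclideanSpace.single 1 (Real.sign b * (L / T) * (t - τ))
    with hUdef
  have hU0 : U 0 = 0 := by
    simp only [hUdef, if_pos hτnn, mul_zero]
    apply euc2_ext <;> simp [EuclideanSpace.single_apply]
  clear_value C₁ C₂ g U
  clear_value c b k xs L1 L2 L τ
  -- key: L2 = 0 when τ = T
  have hbranch : T ≤ τ → L2 = 0 := by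
    intro hTτ
    have hττ : τ = T := le_antisymm hτT hTτ
    rcases eq_or_lt_of_le hLnn with h0 | hpos
    · rw [hL] at h0; linarith
    · have h2 : T * L1 / L = T := by rw [← hτ, hττ]
      have h1 : T * L1 = T * L := (div_eq_iff hpos.ne').mp h2
      have h3 : L1 = L := mul_left_cancel₀ hTne h1
      rw [hL] at h3; linarith
  have hUT : U T 0 = xs ∧ U T 1 = b := by
    by_cases hTτ : T ≤ τ
    · have hL20 : L2 = 0 := hbranch hTτ
      have hLL1 : L = L1 := by rw [hL, hL20, add_zero]
      have hb0 : b = 0 := by rw [hL2] at hL20; exact abs_eq_zero.mp hL20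
      simp only [hUdef, if_pos hTτ]
      constructor
      · rw [EuclideanSpace.single_apply, if_pos rfl]
        have : Real.sign xs * (L / T) * T = Real.sign xs * L := by field_simp
        rw [this, hLL1, hL1, sign_mul_abs xs]
      · rw [EuclideanSpace.single_apply, if_neg (by norm_num), hb0]
    · push_neg at hTτ
      simp only [hUdef, if_neg (not_le.mpr hTτ)]
      constructor
      · simp [EuclideanSpace.single_apply]
      · have hval : Real.sign b * (L / T) * (T - τ) = b := by
          have : Real.sign b * (L / T) * (T - τ) = Real.sign b * ((T - τ) * (L / T)) := by ring
          rw [this, hτL2, hL2, sign_mul_abs b]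
        simp [EuclideanSpace.single_apply, hval]
  refine ⟨U, g, ⟨?_, ?_, ?_⟩, ?_, ?_, ?_, ?_⟩
  · rw [hg]; exact ite_intervalIntegrable τ C₁ C₂ 0 T
  · have heq : (fun t => ‖g t‖ ^ 2) = fun t => if t < τ then ‖C₁‖ ^ 2 else ‖C₂‖ ^ 2 := by
      funext t
      by_cases h : t < τ <;> simp [hg, h]
    rw [heq]
    exact ite_intervalIntegrable τ _ _ 0 T
  · intro t ht
    rw [hU0, zero_add]
    simp only [hg]
    by_cases htτ : t ≤ τ
    · rw [ite_integral_left C₁ C₂ ht.1 htτ]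
      simp only [hUdef, if_pos htτ, sub_zero]
      apply euc2_ext <;>
        simp [hC₁, EuclideanSpace.single_apply, PiLp.smul_apply, smul_eq_mul] <;> ring
    · push_neg at htτ
      rw [← intervalIntegral.integral_add_adjacent_intervals
          (ite_intervalIntegrable τ C₁ C₂ 0 τ) (ite_intervalIntegrable τ C₁ C₂ τ t)]
      rw [ite_integral_left C₁ C₂ hτnn (le_refl τ),
        ite_integral_right C₁ C₂ (le_refl τ) htτ.le]
      simp only [hUdef, if_neg (not_le.mpr htτ), sub_zero]
      have hxs' : τ * (Real.sign xs * (L / T)) = xs := by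
        have h1 : τ * (Real.sign xs * (L / T)) = Real.sign xs * (τ * (L / T)) := by ring
        rw [h1, hτL, hL1, sign_mul_abs xs]
      apply euc2_ext <;>
        simp [hC₁, hC₂, EuclideanSpace.single_apply, PiLp.smul_apply, PiLp.add_apply,
          smul_eq_mul, hxs'] <;> ring_nf
  · intro t ht
    by_cases htτ : t ≤ τ
    · have h1 : U t 1 = 0 := by
        simp [hUdef, if_pos htτ, EuclideanSpace.single_apply]
      rw [h1, mul_zero, Real.sin_zero, mul_zero]
    · have h0 : U t 0 = xs := by
        simp [hUdef, if_neg htτ, EuclideanSpace.single_apply]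
      rw [h0, hxs, sin_two_pi_half_int k, zero_mul]
  · rw [hU0, norm_zero]
    positivity
  · have hcoord0 : (U T - T • w) 0 = xs - c := by
      simp [PiLp.sub_apply, PiLp.smul_apply, smul_eq_mul, hUT.1, hc]
    have hcoord1 : (U T - T • w) 1 = 0 := by
      simp [PiLp.sub_apply, PiLp.smul_apply, smul_eq_mul, hUT.2, hb]
    calc ‖U T - T • w‖ ≤ |(U T - T • w) 0| + |(U T - T • w) 1| := norm_le_abs_add _
      _ = |xs - c| := by rw [hcoord0, hcoord1, abs_zero, add_zero]
      _ ≤ 1 / 4 := hxsc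
      _ ≤ Real.sqrt 2 := by
          have h1 : (1 : ℝ) ≤ Real.sqrt 2 := by
            rw [show (1 : ℝ) = Real.sqrt 1 by simp]
            exact Real.sqrt_le_sqrt (by norm_num)
          linarith
  · have heq : (fun t => ‖g t‖ ^ 2) = fun t => if t < τ then ‖C₁‖ ^ 2 else ‖C₂‖ ^ 2 := by
      funext t
      by_cases h : t < τ <;> simp [hg, h]
    rw [heq, ← intervalIntegral.integral_add_adjacent_intervals
        (ite_intervalIntegrable τ _ _ 0 τ) (ite_intervalIntegrable τ _ _ τ T),
      ite_integral_left (‖C₁‖ ^ 2) (‖C₂‖ ^ 2) hτnn (le_refl τ),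
      ite_integral_right (‖C₁‖ ^ 2) (‖C₂‖ ^ 2) (le_refl τ) hτT]
    have hnC₁ : ‖C₁‖ ^ 2 = (Real.sign xs) ^ 2 * (L / T) ^ 2 := by
      rw [hC₁, EuclideanSpace.norm_single, Real.norm_eq_abs, sq_abs, mul_pow]
    have hnC₂ : ‖C₂‖ ^ 2 = (Real.sign b) ^ 2 * (L / T) ^ 2 := by
      rw [hC₂, EuclideanSpace.norm_single, Real.norm_eq_abs, sq_abs, mul_pow]
    rw [smul_eq_mul, smul_eq_mul, sub_zero, hnC₁, hnC₂]
    have hbound1 : τ * ((Real.sign xs) ^ 2 * (L / T) ^ 2) ≤ τ * (L / T) ^ 2 := by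
      apply mul_le_mul_of_nonneg_left _ hτnn
      nlinarith [sign_sq_le_one xs, sq_nonneg (L / T)]
    have hbound2 : (T - τ) * ((Real.sign b) ^ 2 * (L / T) ^ 2) ≤ (T - τ) * (L / T) ^ 2 := by
      apply mul_le_mul_of_nonneg_left _ (sub_nonneg.mpr hτT)
      nlinarith [sign_sq_le_one b, sq_nonneg (L / T)]
    have hsum : τ * (L / T) ^ 2 + (T - τ) * (L / T) ^ 2 = L ^ 2 / T := by
      field_simp; ring
    have hLle : L ≤ T * |w 0| + 1 / 4 + T * |w 1| := by
      have h1 : L1 ≤ |c| + 1 / 4 := by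
        rw [hL1]
        have h2 := abs_sub_abs_le_abs_sub xs c
        linarith [hxsc]
      have hc' : |c| = T * |w 0| := by rw [hc, abs_mul, abs_of_pos hT]
      have hb' : L2 = T * |w 1| := by rw [hL2, hb, abs_mul, abs_of_pos hT]
      rw [hL]; linarith
    have hfinal : L ^ 2 / T ≤ (T * |w 0| + 1 / 4 + T * |w 1|) ^ 2 / T :=
      div_le_div_of_nonneg_right (pow_le_pow_left₀ hLnn hLle 2) hT.le |>.trans_eq rfl
    linarith [hbound1, hbound2, hsum, hfinal]

theorem main_aux (w : Euc 2) :
    Tendsto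
      (fun T : ℝ => psiT
        (fun p : Euc 2 => Real.sin (2 * Real.pi * p 0) * Real.sin (2 * Real.pi * p 1))
        (0 : ℝ) T w)
      atTop (𝓝 (ENNReal.ofReal ((|w 0| + |w 1|) ^ 2))) := by
  set N : ℝ := |w 0| + |w 1| with hN
  have hNnn : 0 ≤ N := add_nonneg (abs_nonneg _) (abs_nonneg _)
  have hsqrt2 : Real.sqrt ((2 : ℕ) : ℝ) = Real.sqrt 2 := by norm_num
  -- limits of the bounding functions
  have hlim1 : Tendsto (fun T : ℝ => N - 4 * Real.sqrt 2 / T) atTop (𝓝 N) := by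
    have h0 : Tendsto (fun T : ℝ => 4 * Real.sqrt 2 / T) atTop (𝓝 0) :=
      tendsto_const_nhds.div_atTop tendsto_id
    simpa using tendsto_const_nhds.sub h0
  have hlimlow : Tendsto (fun T : ℝ => ENNReal.ofReal ((max (N - 4 * Real.sqrt 2 / T) 0) ^ 2))
      atTop (𝓝 (ENNReal.ofReal (N ^ 2))) := by
    apply (ENNReal.continuous_ofReal.tendsto _).comp
    have h2 : Tendsto (fun T : ℝ => max (N - 4 * Real.sqrt 2 / T) 0) atTop (𝓝 (max N 0)) :=
      hlim1.max tendsto_const_nhds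
    rw [max_eq_left hNnn] at h2
    exact h2.pow 2
  have hlimup : Tendsto (fun T : ℝ => ENNReal.ofReal ((N + 1 / (4 * T)) ^ 2))
      atTop (𝓝 (ENNReal.ofReal (N ^ 2))) := by
    apply (ENNReal.continuous_ofReal.tendsto _).comp
    have h0 : Tendsto (fun T : ℝ => 1 / (4 * T)) atTop (𝓝 0) := by
      apply tendsto_const_nhds.div_atTop
      exact Tendsto.const_mul_atTop (by norm_num) tendsto_id
    have h2 : Tendsto (fun T : ℝ => N + 1 / (4 * T)) atTop (𝓝 N) := by
      simpa using tendsto_const_nhds.add h0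
    exact h2.pow 2
  apply tendsto_of_tendsto_of_tendsto_of_le_of_le' hlimlow hlimup
  -- lower bound
  · filter_upwards [eventually_gt_atTop (0 : ℝ)] with T hT
    have hTne : T ≠ 0 := hT.ne'
    rw [psiT]
    have hsInf : ENNReal.ofReal (T * (max (N - 4 * Real.sqrt 2 / T) 0) ^ 2) ≤
        sInf {e : ℝ≥0∞ | ∃ u u' : ℝ → Euc 2, IsH1On u u' 0 T ∧
          (∀ t ∈ Set.Icc (0 : ℝ) T,
            Real.sin (2 * Real.pi * u t 0) * Real.sin (2 * Real.pi * u t 1) = (0 : ℝ)) ∧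
          ‖u 0‖ ≤ Real.sqrt ((2 : ℕ) : ℝ) ∧ ‖u T - T • w‖ ≤ Real.sqrt ((2 : ℕ) : ℝ) ∧
          e = ENNReal.ofReal (∫ t in (0 : ℝ)..T, ‖u' t‖ ^ 2)} := by
      apply le_sInf
      rintro e ⟨u, u', hH1, hφ, hu0, huT, rfl⟩
      apply ENNReal.ofReal_le_ofReal
      rw [hsqrt2] at hu0 huT
      have hS := lower_energy hT hH1.1 hH1.2.2 hφ
      have hCS := sq_integral_norm_le hT hH1.1 hH1.2.1
      have hSnn : 0 ≤ ∫ t in (0 : ℝ)..T, ‖u' t‖ :=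
        intervalIntegral.integral_nonneg hT.le (fun t _ => norm_nonneg _)
      -- coordinate displacement bounds
      have hcb : ∀ i : Fin 2, T * |w i| - 2 * Real.sqrt 2 ≤ |u T i - u 0 i| := by
        intro i
        have h1 : |u T i - T * w i| ≤ Real.sqrt 2 := by
          have := abs_coord_le (u T - T • w) i
          have hcoord : (u T - T • w) i = u T i - T * w i := by
            simp [PiLp.sub_apply, PiLp.smul_apply, smul_eq_mul]
          rw [hcoord] at this
          exact this.trans huT
        have h2 : |u 0 i| ≤ Real.sqrt 2 := (abs_coord_le (u 0) i).trans hu0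
        have htri : |T * w i| ≤ |u T i - T * w i| + |u T i - u 0 i| + |u 0 i| := by
          have heq : T * w i = -(u T i - T * w i) + (u T i - u 0 i) + u 0 i := by ring
          calc |T * w i| = |-(u T i - T * w i) + (u T i - u 0 i) + u 0 i| := by rw [← heq]
            _ ≤ |-(u T i - T * w i) + (u T i - u 0 i)| + |u 0 i| := abs_add_le _ _
            _ ≤ |-(u T i - T * w i)| + |u T i - u 0 i| + |u 0 i| := by
                have := abs_add_le (-(u T i - T * w i)) (u T i - u 0 i)
                linarith
            _ = |u T i - T * w i| + |u T i - u 0 i| + |u 0 i| := by rw [abs_neg]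
        have habs : |T * w i| = T * |w i| := by rw [abs_mul, abs_of_pos hT]
        linarith
      have hsum : T * N - 4 * Real.sqrt 2 ≤ |u T 0 - u 0 0| + |u T 1 - u 0 1| := by
        have h0 := hcb 0
        have h1 := hcb 1
        rw [hN]; ring_nf; ring_nf at h0 h1 ⊢; linarith
      set S := ∫ t in (0 : ℝ)..T, ‖u' t‖ with hSdef
      have hM : max (T * N - 4 * Real.sqrt 2) 0 ≤ S :=
        max_le (by linarith) hSnn
      have hMnn : (0 : ℝ) ≤ max (T * N - 4 * Real.sqrt 2) 0 := le_max_right _ _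
      have hM2 : (max (T * N - 4 * Real.sqrt 2) 0) ^ 2 ≤ T * ∫ t in (0 : ℝ)..T, ‖u' t‖ ^ 2 :=
        le_trans (pow_le_pow_left₀ hMnn hM 2) hCS
      have hmaxeq : max (N - 4 * Real.sqrt 2 / T) 0 = (max (T * N - 4 * Real.sqrt 2) 0) / T := by
        rw [eq_comm, ← max_div_div_right hT.le]
        congr 1
        · field_simp
        · exact zero_div T
      rw [hmaxeq, div_pow]
      have heq2 : T * ((max (T * N - 4 * Real.sqrt 2) 0) ^ 2 / T ^ 2) =
          (max (T * N - 4 * Real.sqrt 2) 0) ^ 2 / T := by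
        field_simp
      rw [heq2, div_le_iff₀ hT]
      nlinarith [hM2]
    calc ENNReal.ofReal ((max (N - 4 * Real.sqrt 2 / T) 0) ^ 2)
        = ENNReal.ofReal (1 / T) * ENNReal.ofReal (T * (max (N - 4 * Real.sqrt 2 / T) 0) ^ 2) := by
          rw [← ENNReal.ofReal_mul (by positivity)]
          congr 1
          field_simp
      _ ≤ _ := mul_le_mul_right hsInf _
  -- upper bound
  · filter_upwards [eventually_gt_atTop (0 : ℝ)] with T hT
    have hTne : T ≠ 0 := hT.ne'
    obtain ⟨u, u', hH1, hφ, hu0, huT, hE⟩ := exists_path hT w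
    rw [psiT]
    have hmem : ENNReal.ofReal (∫ t in (0 : ℝ)..T, ‖u' t‖ ^ 2) ∈
        {e : ℝ≥0∞ | ∃ u u' : ℝ → Euc 2, IsH1On u u' 0 T ∧
          (∀ t ∈ Set.Icc (0 : ℝ) T,
            Real.sin (2 * Real.pi * u t 0) * Real.sin (2 * Real.pi * u t 1) = (0 : ℝ)) ∧
          ‖u 0‖ ≤ Real.sqrt ((2 : ℕ) : ℝ) ∧ ‖u T - T • w‖ ≤ Real.sqrt ((2 : ℕ) : ℝ) ∧
          e = ENNReal.ofReal (∫ t in (0 : ℝ)..T, ‖u' t‖ ^ 2)} := by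
      refine ⟨u, u', ⟨hH1.1, hH1.2.1, hH1.2.2⟩, hφ, ?_, ?_, rfl⟩
      · rw [hsqrt2]; exact hu0
      · rw [hsqrt2]; exact huT
    calc ENNReal.ofReal (1 / T) * sInf _ ≤
        ENNReal.ofReal (1 / T) * ENNReal.ofReal (∫ t in (0 : ℝ)..T, ‖u' t‖ ^ 2) :=
          mul_le_mul_right (sInf_le hmem) _
      _ ≤ ENNReal.ofReal (1 / T) * ENNReal.ofReal ((T * |w 0| + 1 / 4 + T * |w 1|) ^ 2 / T) :=
          mul_le_mul_right (ENNReal.ofReal_le_ofReal hE) _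
      _ = ENNReal.ofReal ((1 / T) * ((T * |w 0| + 1 / 4 + T * |w 1|) ^ 2 / T)) := by
          rw [← ENNReal.ofReal_mul (by positivity)]
      _ ≤ ENNReal.ofReal ((N + 1 / (4 * T)) ^ 2) := by
          apply ENNReal.ofReal_le_ofReal
          have heq : (1 / T) * ((T * |w 0| + 1 / 4 + T * |w 1|) ^ 2 / T) =
              (N + 1 / (4 * T)) ^ 2 := by
            rw [hN]; field_simp; ring
          rw [heq]

end SinGridAux

/-- Example 5.1: for `φ(x,y) = sin(2πx)·sin(2πy)` the homogenized density on the
level `z = 0` is the squared `ℓ¹` norm. -/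
theorem psiT_limit_sin_grid (w : Euc 2) :
    Tendsto
      (fun T : ℝ => psiT
        (fun p : Euc 2 => Real.sin (2 * Real.pi * p 0) * Real.sin (2 * Real.pi * p 1))
        (0 : ℝ) T w)
      atTop (𝓝 (ENNReal.ofReal ((|w 0| + |w 1|) ^ 2))) := SinGridAux.main_aux w
end
end

section
/- Let G = {(x,y) ∈ ℝ² : sin(2πx)·sin(2πy) = 0} (the grid of all horizontal and vertical lines with coordinate in (1/2)ℤ). If T > 0 and γ ∈ H¹([0,T];ℝ²) satisfies γ(t) ∈ G for every t ∈ [0,T], then the length of γ satisfies ∫₀ᵀ|γ'(t)|dt ≥ |γ₁(T) − γ₁(0)| + |γ₂(T) − γ₂(0)|, i.e. the length of a curve lying in the grid is at least the ℓ¹ distance between its endpoints. -/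
open MeasureTheory Filter
open scoped ENNReal Topology

noncomputable section

/-- The grid `G = {sin(2πx)·sin(2πy) = 0}`, i.e. the union of all horizontal and
vertical lines with a coordinate in `(1/2)ℤ`. -/
def gridG : Set (Euc 2) :=
  {p : Euc 2 | Real.sin (2 * Real.pi * p 0) * Real.sin (2 * Real.pi * p 1) = 0}

open Metric Set intervalIntegral

/-- Lebesgue differentiation: the primitive of an integrable function has a.e. derivative. -/
lemma ae_hasDerivAt_primitive {E : Type*} [NormedAddCommGroup E] [NormedSpace ℝ E] [CompleteSpace E]
    (f : ℝ → E) (hf : Integrable f volume) :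
    ∀ᵐ x ∂(volume : Measure ℝ), HasDerivAt (fun u => ∫ t in (0:ℝ)..u, f t) (f x) x := by
  filter_upwards [IsUnifLocDoublingMeasure.ae_tendsto_average_norm_sub
    (μ := (volume : Measure ℝ)) hf.locallyIntegrable 1] with x hx
  rw [hasDerivAt_iff_tendsto_slope, tendsto_iff_norm_sub_tendsto_zero]
  have hδ : Tendsto (fun y : ℝ => |y - x| / 2) (𝓝[≠] x) (𝓝[>] 0) := by
    rw [tendsto_nhdsWithin_iff]
    constructor
    · have : Tendsto (fun y : ℝ => |y - x| / 2) (𝓝 x) (𝓝 (|x - x| / 2)) :=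
        ((continuous_abs.comp (continuous_id.sub continuous_const)).div_const 2).tendsto x
      simpa using this.mono_left nhdsWithin_le_nhds
    · filter_upwards [self_mem_nhdsWithin] with y hy
      have : y - x ≠ 0 := sub_ne_zero.2 hy
      have := abs_pos.2 this
      exact mem_Ioi.2 (by positivity)
  have hmem : ∀ᶠ y in 𝓝[≠] x, x ∈ closedBall ((x + y) / 2) (1 * (|y - x| / 2)) := by
    filter_upwards with y
    rw [mem_closedBall, Real.dist_eq, one_mul]
    rw [show x - (x + y) / 2 = (x - y) / 2 by ring, abs_div, abs_sub_comm]
    simp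
  have key := hx (fun y : ℝ => (x + y) / 2) (fun y : ℝ => |y - x| / 2) hδ hmem
  apply squeeze_zero' (Eventually.of_forall fun y => norm_nonneg _) _ key
  filter_upwards [self_mem_nhdsWithin] with y hy
  have hyx : y - x ≠ 0 := sub_ne_zero.2 hy
  -- the interval integral difference
  have hfi : ∀ a b : ℝ, IntervalIntegrable f volume a b := fun a b => hf.intervalIntegrable
  have hdiff : (∫ t in (0:ℝ)..y, f t) - ∫ t in (0:ℝ)..x, f t = ∫ t in x..y, f t :=
    integral_interval_sub_left (hfi 0 y) (hfi 0 x)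
  have hslope : slope (fun u => ∫ t in (0:ℝ)..u, f t) x y - f x
      = (y - x)⁻¹ • ∫ t in x..y, (f t - f x) := by
    rw [intervalIntegral.integral_sub (hfi x y) intervalIntegrable_const,
      intervalIntegral.integral_const, slope_def_module, hdiff, smul_sub, smul_smul,
      inv_mul_cancel₀ hyx, one_smul]
  rw [hslope]
  have hIcc : Set.uIoc x y ⊆ closedBall ((x + y) / 2) (|y - x| / 2) := by
    intro t ht
    rw [Real.closedBall_eq_Icc]
    have h1 : (x + y) / 2 - |y - x| / 2 = min x y := by
      rcases le_total x y with h | h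
      · rw [abs_of_nonneg (by linarith), min_eq_left h]; ring
      · rw [abs_of_nonpos (by linarith), min_eq_right h]; ring
    have h2 : (x + y) / 2 + |y - x| / 2 = max x y := by
      rcases le_total x y with h | h
      · rw [abs_of_nonneg (by linarith), max_eq_right h]; ring
      · rw [abs_of_nonpos (by linarith), max_eq_left h]; ring
    rw [h1, h2]
    exact Set.Ioc_subset_Icc_self ht
  have hint2 : IntegrableOn (fun t => ‖f t - f x‖)
      (closedBall ((x + y) / 2) (|y - x| / 2)) volume :=
    (hf.integrableOn.sub (integrableOn_const measure_closedBall_lt_top.ne)).norm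
  calc ‖(y - x)⁻¹ • ∫ t in x..y, (f t - f x)‖
      = |y - x|⁻¹ * ‖∫ t in x..y, (f t - f x)‖ := by
        rw [norm_smul, Real.norm_eq_abs, abs_inv]
    _ ≤ |y - x|⁻¹ * ∫ t in Set.uIoc x y, ‖f t - f x‖ :=
        mul_le_mul_of_nonneg_left intervalIntegral.norm_integral_le_integral_norm_uIoc
          (by positivity)
    _ ≤ |y - x|⁻¹ * ∫ t in closedBall ((x + y) / 2) (|y - x| / 2), ‖f t - f x‖ :=
        mul_le_mul_of_nonneg_left (setIntegral_mono_set hint2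
          (Eventually.of_forall fun t => norm_nonneg _) (Eventually.of_forall hIcc))
          (by positivity)
    _ = ⨍ t in closedBall ((x + y) / 2) (|y - x| / 2), ‖f t - f x‖ := by
        rw [setAverage_eq, Real.volume_real_closedBall
          (by positivity), smul_eq_mul]
        congr 2
        rw [show 2 * (|y - x| / 2) = |y - x| by ring]

/-- A.e. point of a set is an accumulation point of it. -/
lemma ae_neBot_nhdsWithin_diff (S : Set ℝ) :
    ∀ᵐ t ∂((volume : Measure ℝ).restrict S), (𝓝[S \ {t}] t).NeBot := by
  filter_upwards [Besicovitch.ae_tendsto_measure_inter_div volume S] with x hx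
  by_contra hbot
  rw [not_neBot] at hbot
  have hx' : x ∉ closure (S \ {x}) := fun h =>
    (mem_closure_iff_nhdsWithin_neBot.1 h).ne hbot
  rw [Metric.mem_closure_iff] at hx'
  push_neg at hx'
  obtain ⟨ε, hε, hsep⟩ := hx'
  have hzero : ∀ᶠ r in 𝓝[>] (0:ℝ),
      volume (S ∩ closedBall x r) / volume (closedBall x r) = 0 := by
    filter_upwards [Ioo_mem_nhdsGT_of_mem (Set.left_mem_Ico.2 (half_pos hε))] with r hr
    have hsub : S ∩ closedBall x r ⊆ {x} := by
      intro y ⟨hyS, hyb⟩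
      by_contra hyx
      have := hsep y ⟨hyS, hyx⟩
      rw [mem_closedBall, dist_comm] at hyb
      linarith [hr.2, half_lt_self hε]
    have : volume (S ∩ closedBall x r) = 0 :=
      le_antisymm (le_trans (measure_mono hsub) (by simp)) zero_le
    rw [this, ENNReal.zero_div]
  have h0 : Tendsto (fun r => volume (S ∩ closedBall x r) / volume (closedBall x r))
      (𝓝[>] (0:ℝ)) (𝓝 0) :=
    tendsto_const_nhds.congr' (by filter_upwards [hzero] with r h using h.symm)
  exact zero_ne_one (tendsto_nhds_unique h0 hx)

lemma deriv_eq_zero_of_sin_eq_zero {g : ℝ → ℝ} {S : Set ℝ} {d : ℝ}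
    (hS : ∀ t ∈ S, Real.sin (2 * Real.pi * g t) = 0) {t : ℝ} (ht : t ∈ S)
    (hacc : (𝓝[S \ {t}] t).NeBot) (hd : HasDerivAt g d t) : d = 0 := by
  set h : ℝ → ℝ := fun s => Real.sin (2 * Real.pi * g s) with hh
  have hd2 : HasDerivAt (fun s => 2 * Real.pi * g s) (2 * Real.pi * d) t := hd.const_mul _
  have hder : HasDerivAt h (Real.cos (2 * Real.pi * g t) * (2 * Real.pi * d)) t :=
    (Real.hasDerivAt_sin _).comp t hd2
  have h1 : Tendsto (slope h t) (𝓝[S \ {t}] t)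
      (𝓝 (Real.cos (2 * Real.pi * g t) * (2 * Real.pi * d))) :=
    (hasDerivAt_iff_tendsto_slope.1 hder).mono_left
      (nhdsWithin_mono _ (fun y hy => hy.2))
  have h2 : Tendsto (slope h t) (𝓝[S \ {t}] t) (𝓝 0) := by
    have : ∀ᶠ y in 𝓝[S \ {t}] t, slope h t y = 0 := by
      filter_upwards [self_mem_nhdsWithin] with y hy
      rw [slope_def_field, hh]
      simp [hS y hy.1, hS t ht]
    exact tendsto_const_nhds.congr' (by filter_upwards [this] with y h using h.symm)
  have hcd : Real.cos (2 * Real.pi * g t) * (2 * Real.pi * d) = 0 :=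
    tendsto_nhds_unique h1 h2
  have hcos : Real.cos (2 * Real.pi * g t) ≠ 0 := by
    intro hc
    have := Real.sin_sq_add_cos_sq (2 * Real.pi * g t)
    rw [hS t ht, hc] at this
    norm_num at this
  have := (mul_eq_zero.1 hcd).resolve_left hcos
  have hπ : (2 : ℝ) * Real.pi ≠ 0 := by positivity
  exact (mul_eq_zero.1 this).resolve_left hπ

lemma abs_coord_le (v : EuclideanSpace ℝ (Fin 2)) (i : Fin 2) : |v i| ≤ ‖v‖ := by
  rw [EuclideanSpace.norm_eq, ← Real.sqrt_sq_eq_abs]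
  apply Real.sqrt_le_sqrt
  have := Finset.single_le_sum (f := fun j => ‖v j‖ ^ 2)
    (fun j _ => sq_nonneg _) (Finset.mem_univ i)
  simpa [Real.norm_eq_abs, sq_abs] using this

/-- A curve lying in the grid `G` has length at least the `ℓ¹` distance between
its endpoints. -/
theorem length_ge_l1_of_mem_grid
    (T : ℝ) (hT : 0 < T) (γ γ' : ℝ → Euc 2) (hγ : IsH1On γ γ' 0 T)
    (hmem : ∀ t ∈ Set.Icc (0 : ℝ) T, γ t ∈ gridG) :
    |γ T 0 - γ 0 0| + |γ T 1 - γ 0 1| ≤ ∫ t in (0 : ℝ)..T, ‖γ' t‖ := by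
  obtain ⟨hint, -, hrep⟩ := hγ
  have hTle : (0:ℝ) ≤ T := hT.le
  set g : ℝ → Euc 2 := (Set.Ioc (0:ℝ) T).indicator γ' with hgdef
  have hint' : IntegrableOn γ' (Set.Ioc (0:ℝ) T) volume := by
    have := hint
    rw [intervalIntegrable_iff, Set.uIoc_of_le hTle] at this
    exact this
  have hgint : Integrable g volume := by
    rw [hgdef, integrable_indicator_iff measurableSet_Ioc]
    exact hint'
  set F : ℝ → Euc 2 := fun u => γ 0 + ∫ t in (0:ℝ)..u, g t with hFdef
  have hFeq : ∀ t ∈ Set.Icc (0:ℝ) T, γ t = F t := by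
    intro t ht
    rw [hrep t ht, hFdef]
    simp only [add_right_inj]
    rw [intervalIntegral.integral_of_le ht.1, intervalIntegral.integral_of_le ht.1]
    refine setIntegral_congr_fun measurableSet_Ioc (fun s hs => ?_)
    rw [hgdef, Set.indicator_of_mem (Set.mem_Ioc.2 ⟨hs.1, hs.2.trans ht.2⟩)]
  have hFcont : Continuous F :=
    continuous_const.add (hgint.continuous_primitive 0)
  have hFder : ∀ᵐ x ∂(volume : Measure ℝ), HasDerivAt F (g x) x := by
    filter_upwards [ae_hasDerivAt_primitive g hgint] with x hx
    exact hx.const_add (γ 0)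
  -- coordinate level sets
  set S : Fin 2 → Set ℝ := fun i =>
    Set.Ioo 0 T ∩ {t | Real.sin (2 * Real.pi * F t i) = 0} with hSdef
  have hScont : ∀ i : Fin 2, Continuous fun t => F t i := fun i =>
    (EuclideanSpace.proj i).continuous.comp hFcont
  have hSmeas : ∀ i : Fin 2, MeasurableSet (S i) := fun i =>
    measurableSet_Ioo.inter
      ((Real.continuous_sin.comp (continuous_const.mul (hScont i))).measurable
        (measurableSet_singleton 0))
  have hcover : ∀ t ∈ Set.Ioo (0:ℝ) T, t ∈ S 0 ∪ S 1 := by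
    intro t ht
    have htIcc : t ∈ Set.Icc (0:ℝ) T := ⟨ht.1.le, ht.2.le⟩
    have hmem' := hmem t htIcc
    rw [gridG, Set.mem_setOf_eq, hFeq t htIcc] at hmem'
    rcases mul_eq_zero.1 hmem' with h | h
    · exact Or.inl ⟨ht, h⟩
    · exact Or.inr ⟨ht, h⟩
  -- on each level set, the corresponding coordinate derivative vanishes a.e.
  have hvanish : ∀ i : Fin 2, ∀ᵐ t ∂(volume : Measure ℝ), t ∈ S i → g t i = 0 := by
    intro i
    rw [← ae_restrict_iff' (hSmeas i)]
    filter_upwards [ae_neBot_nhdsWithin_diff (S i),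
      ae_restrict_of_ae hFder, ae_restrict_mem (hSmeas i)] with t hacc hder htS
    have hdi : HasDerivAt (fun u => F u i) (g t i) t := by
      have := (EuclideanSpace.proj (𝕜 := ℝ) i).hasFDerivAt.comp_hasDerivAt t hder
      exact this
    exact deriv_eq_zero_of_sin_eq_zero (fun s hs => hs.2) htS hacc hdi
  -- the pointwise inequality a.e. on Icc 0 T
  have hae : ∀ᵐ t ∂((volume : Measure ℝ).restrict (Set.Icc 0 T)),
      |γ' t 0| + |γ' t 1| ≤ ‖γ' t‖ := by
    rw [ae_restrict_iff' measurableSet_Icc]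
    have hends : ∀ᵐ t ∂(volume : Measure ℝ), t ≠ 0 ∧ t ≠ T := by
      have h0 : ∀ᵐ t ∂(volume : Measure ℝ), t ≠ 0 :=
        ae_iff.2 (by simp [Real.volume_singleton])
      have h1 : ∀ᵐ t ∂(volume : Measure ℝ), t ≠ T :=
        ae_iff.2 (by simp [Real.volume_singleton])
      filter_upwards [h0, h1] with t using And.intro
    filter_upwards [hvanish 0, hvanish 1, hends] with t h0 h1 hend ht
    have htIoo : t ∈ Set.Ioo (0:ℝ) T :=
      ⟨lt_of_le_of_ne ht.1 (Ne.symm hend.1), lt_of_le_of_ne ht.2 hend.2⟩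
    have hgt : g t = γ' t := Set.indicator_of_mem (Set.mem_Ioc.2 ⟨htIoo.1, htIoo.2.le⟩) γ'
    have hor : γ' t 0 = 0 ∨ γ' t 1 = 0 := by
      rcases hcover t htIoo with h | h
      · exact Or.inl (hgt ▸ h0 h)
      · exact Or.inr (hgt ▸ h1 h)
    rcases hor with h | h
    · rw [h]; simpa using abs_coord_le (γ' t) 1
    · rw [h]; simpa using abs_coord_le (γ' t) 0
  -- integrability of coordinates
  have hci : ∀ i : Fin 2, IntervalIntegrable (fun t => γ' t i) volume 0 T := by
    intro i
    rw [intervalIntegrable_iff, Set.uIoc_of_le hTle]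
    exact (EuclideanSpace.proj (𝕜 := ℝ) i).integrable_comp hint'
  have habs : ∀ i : Fin 2, IntervalIntegrable (fun t => |γ' t i|) volume 0 T := by
    intro i
    simpa [Real.norm_eq_abs] using (hci i).norm
  -- endpoint identities
  have hend : ∀ i : Fin 2, γ T i - γ 0 i = ∫ t in (0:ℝ)..T, γ' t i := by
    intro i
    have := hrep T ⟨hTle, le_rfl⟩
    have happ : γ T i = γ 0 i + (∫ s in (0:ℝ)..T, γ' s) i := by
      rw [this]; simp
    have hproj : (∫ s in (0:ℝ)..T, γ' s) i = ∫ t in (0:ℝ)..T, γ' t i := by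
      have := (EuclideanSpace.proj (𝕜 := ℝ) i).intervalIntegral_comp_comm hint
      simpa using this.symm
    rw [happ, hproj]; ring
  calc |γ T 0 - γ 0 0| + |γ T 1 - γ 0 1|
      ≤ (∫ t in (0:ℝ)..T, |γ' t 0|) + ∫ t in (0:ℝ)..T, |γ' t 1| := by
        gcongr
        · rw [hend 0]
          exact intervalIntegral.abs_integral_le_integral_abs hTle
        · rw [hend 1]
          exact intervalIntegral.abs_integral_le_integral_abs hTle
    _ = ∫ t in (0:ℝ)..T, (|γ' t 0| + |γ' t 1|) :=
        (intervalIntegral.integral_add (habs 0) (habs 1)).symm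
    _ ≤ ∫ t in (0:ℝ)..T, ‖γ' t‖ :=
        intervalIntegral.integral_mono_ae_restrict hTle ((habs 0).add (habs 1)) hint.norm hae
end
end

section
/- Let φ: ℝ³ → ℝ be given by φ(p) = dist²(p, ℤ³), the squared Euclidean distance from p to the integer lattice in ℝ³. Then for every w = (w₁,w₂,w₃) ∈ ℝ³, limsup_{T→∞} ψ_T^{1/4}(w) ≤ (π/2)²·(max(μ, |w₁| + |w₂| + |w₃| − μ))², where μ = min(|w₁|,|w₂|,|w₃|). -/
open MeasureTheory Filter
open scoped ENNReal Topology

noncomputable section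

namespace Ex54

open intervalIntegral
open scoped RealInnerProductSpace

def Lat : Set (Euc 3) := {q : Euc 3 | ∀ i : Fin 3, ∃ k : ℤ, q i = (k : ℝ)}

lemma Lat.zero : (0 : Euc 3) ∈ Lat := fun i => ⟨0, by simp⟩

lemma Lat.add {x y : Euc 3} (hx : x ∈ Lat) (hy : y ∈ Lat) : x + y ∈ Lat := by
  intro i
  obtain ⟨k, hk⟩ := hx i; obtain ⟨l, hl⟩ := hy i
  refine ⟨k + l, ?_⟩
  have : (x + y) i = x i + y i := rfl
  rw [this, hk, hl]; push_cast; ring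

lemma Lat.nsmul (n : ℕ) {x : Euc 3} (hx : x ∈ Lat) : n • x ∈ Lat := by
  intro i
  obtain ⟨k, hk⟩ := hx i
  refine ⟨n * k, ?_⟩
  have h2 : (n • x) i = (n : ℝ) * x i := by
    have : (n • x) i = n • (x i) := rfl
    rw [this]; simp
  rw [h2, hk]; push_cast; ring

lemma Lat.neg {x : Euc 3} (hx : x ∈ Lat) : -x ∈ Lat := by
  intro i
  obtain ⟨k, hk⟩ := hx i
  refine ⟨-k, ?_⟩
  have : (-x) i = -(x i) := rfl
  rw [this, hk]; push_cast; ring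

lemma coord_le_dist (x y : Euc 3) (i : Fin 3) : dist (x i) (y i) ≤ dist x y := by
  rw [EuclideanSpace.dist_eq]
  have h1 : dist (x i) (y i) ^ 2 ≤ ∑ j : Fin 3, dist (x j) (y j) ^ 2 :=
    Finset.single_le_sum (f := fun j => dist (x j) (y j) ^ 2) (fun j _ => sq_nonneg _)
      (Finset.mem_univ i)
  calc dist (x i) (y i) = Real.sqrt (dist (x i) (y i) ^ 2) := by
        rw [Real.sqrt_sq dist_nonneg]
  _ ≤ _ := Real.sqrt_le_sqrt h1

lemma dist_ge_one {x y : Euc 3} (hx : x ∈ Lat) (hy : y ∈ Lat) (hxy : x ≠ y) : 1 ≤ dist x y := by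
  have : ∃ i, x i ≠ y i := by
    by_contra h
    push_neg at h
    exact hxy (PiLp.ext h)
  obtain ⟨i, hi⟩ := this
  obtain ⟨k, hk⟩ := hx i; obtain ⟨l, hl⟩ := hy i
  have h1 : (1 : ℝ) ≤ dist (x i) (y i) := by
    rw [Real.dist_eq, hk, hl]
    have hkl : k ≠ l := by rintro rfl; exact hi (hk.trans hl.symm)
    have h2 : (1:ℤ) ≤ |k - l| := Int.one_le_abs (by omega)
    calc (1:ℝ) ≤ |((k - l : ℤ) : ℝ)| := by exact_mod_cast h2
    _ = |(k:ℝ) - l| := by push_cast; ring_nf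
  exact h1.trans (coord_le_dist x y i)

lemma infDist_eq_half {z r : Euc 3} (hz : z ∈ Lat) (hr : ‖r‖ = 1/2) :
    Metric.infDist (z + r) Lat = 1/2 := by
  refine le_antisymm ?_ ?_
  · have := Metric.infDist_le_dist_of_mem (x := z + r) hz
    simpa [dist_eq_norm, hr] using this
  · by_contra h
    push_neg at h
    obtain ⟨y, hy, hdy⟩ := (Metric.infDist_lt_iff ⟨z, hz⟩).1 h
    have hzy : dist z y ≤ dist (z + r) y + 1/2 := by
      have h3 : dist z y ≤ dist z (z+r) + dist (z+r) y := dist_triangle _ _ _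
      have h2 : dist z (z + r) = 1/2 := by simp [dist_eq_norm, hr]
      linarith
    by_cases hyz : y = z
    · rw [hyz] at hdy
      have : dist (z + r) z = 1/2 := by simp [dist_eq_norm, hr]
      linarith
    · have := dist_ge_one hz hy (fun e => hyz (e.symm))
      linarith

lemma norm_eq_of_sq {z : Euc 3} {c : ℝ} (hc : 0 ≤ c) (h : ‖z‖^2 = c^2) : ‖z‖ = c := by
  rw [← Real.sqrt_sq (norm_nonneg z), h, Real.sqrt_sq hc]

/-! ### The arc sequence -/

def ac (vm vx vy : Euc 3) (M D : ℕ) (k : ℕ) : Euc 3 :=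
  if k < 2*M then (k/2) • (vm + vx) + (if k % 2 = 0 then 0 else vx)
  else if k ≤ 2*M + 2*D then M • (vm + vx) + ((k - 2*M + 1)/2) • vx
  else M • (vm + vx) + (D+1) • vx + ((k - (2*M + 2*D + 1) + 1)/2) • vy

def ap (vm vx vy : Euc 3) (M D : ℕ) (k : ℕ) : Euc 3 :=
  if k < 2*M then (if k % 2 = 0 then -((1/2:ℝ) • vm) else -((1/2:ℝ) • vx))
  else if k = 2*M then -((1/2:ℝ) • vm)
  else if k ≤ 2*M + 2*D then
    (if (k - 2*M) % 2 = 1 then -((1/2:ℝ) • vx) else (1/2:ℝ) • vm)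
  else if k = 2*M + 2*D + 1 then -((1/2:ℝ) • vx)
  else (if (k - (2*M + 2*D + 1)) % 2 = 1 then -((1/2:ℝ) • vy) else (1/2:ℝ) • vx)

def aq (vm vx vy : Euc 3) (M D : ℕ) (k : ℕ) : Euc 3 :=
  if k < 2*M then (if k % 2 = 0 then (1/2:ℝ) • vx else (1/2:ℝ) • vm)
  else if k ≤ 2*M + 2*D then
    (if (k - 2*M) % 2 = 1 then (1/2:ℝ) • vm else (1/2:ℝ) • vx)
  else (if (k - (2*M + 2*D + 1)) % 2 = 1 then (1/2:ℝ) • vx else (1/2:ℝ) • vy)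

variable {vm vx vy : Euc 3} {M D : ℕ}

lemma chain (vm vx vy : Euc 3) (M D : ℕ) (k : ℕ) :
    ac vm vx vy M D (k+1) + ap vm vx vy M D (k+1) = ac vm vx vy M D k + aq vm vx vy M D k := by
  by_cases h1 : k + 1 < 2*M
  · have hk : k < 2*M := by omega
    by_cases h0 : k % 2 = 0
    · have e1 : (k+1) % 2 ≠ 0 := by omega
      have e2 : (k+1)/2 = k/2 := by omega
      simp only [ac, ap, aq, if_pos h1, if_pos hk, if_pos h0, if_neg e1, e2]
      simp only [← Nat.cast_smul_eq_nsmul ℝ]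
      module
    · have e1 : (k+1) % 2 = 0 := by omega
      have e2 : (k+1)/2 = k/2 + 1 := by omega
      simp only [ac, ap, aq, if_pos h1, if_pos hk, if_neg h0, if_pos e1, e2]
      simp only [← Nat.cast_smul_eq_nsmul ℝ]
      push_cast
      module
  · by_cases h2 : k + 1 = 2*M
    · have hk : k < 2*M := by omega
      have h0 : ¬ (k % 2 = 0) := by omega
      have e1 : ¬ (2*M < 2*M) := by omega
      have e3 : (2*M - 2*M + 1)/2 = 0 := by omega
      have e4 : 2*M ≤ 2*M + 2*D := by omega
      have hM : M = k/2 + 1 := by omega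
      simp only [h2, ac, ap, aq, if_neg e1, if_pos rfl, if_pos e4, e3, if_pos hk, if_neg h0]
      rw [hM]
      simp only [← Nat.cast_smul_eq_nsmul ℝ]
      push_cast
      module
    · by_cases h3 : k = 2*M
      · by_cases hD : 1 ≤ D
        · have e1 : ¬ (k+1 < 2*M) := by omega
          have e2 : ¬ (k+1 = 2*M) := by omega
          have e3 : k+1 ≤ 2*M + 2*D := by omega
          have e4 : (k+1 - 2*M) % 2 = 1 := by omega
          have e5 : (k+1 - 2*M + 1)/2 = 1 := by omega
          have e6 : ¬ (k < 2*M) := by omega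
          have e7 : k ≤ 2*M + 2*D := by omega
          have e8 : (k - 2*M) % 2 ≠ 1 := by omega
          have e9 : (k - 2*M + 1)/2 = 0 := by omega
          simp only [ac, ap, aq, if_neg e1, if_neg e2, if_pos e3, if_pos e4, e5, if_neg e6,
            if_pos e7, if_neg e8, e9]
          simp only [← Nat.cast_smul_eq_nsmul ℝ]
          push_cast
          module
        · have hD0 : D = 0 := by omega
          subst hD0
          have e1 : ¬ (k+1 < 2*M) := by omega
          have e2 : ¬ (k+1 = 2*M) := by omega
          have e3 : ¬ (k+1 ≤ 2*M + 2*0) := by omega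
          have e4 : k+1 = 2*M + 2*0 + 1 := by omega
          have e5 : (k+1 - (2*M + 2*0 + 1) + 1)/2 = 0 := by omega
          have e6 : ¬ (k < 2*M) := by omega
          have e7 : k ≤ 2*M + 2*0 := by omega
          have e8 : (k - 2*M) % 2 ≠ 1 := by omega
          have e9 : (k - 2*M + 1)/2 = 0 := by omega
          simp only [ac, ap, aq, if_neg e1, if_neg e2, if_neg e3, if_pos e4, e5, if_neg e6,
            if_pos e7, if_neg e8, e9]
          simp only [← Nat.cast_smul_eq_nsmul ℝ]
          push_cast
          module
      · by_cases h4 : k + 1 ≤ 2*M + 2*D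
        · have hk2 : ¬ (k < 2*M) := by omega
          have hk3 : ¬ (k = 2*M) := by omega
          have hk4 : k ≤ 2*M + 2*D := by omega
          have e1 : ¬ (k+1 < 2*M) := by omega
          have e2 : ¬ (k+1 = 2*M) := by omega
          by_cases hp : (k - 2*M) % 2 = 1
          · have e4 : ¬ ((k+1 - 2*M) % 2 = 1) := by omega
            have e5 : (k+1 - 2*M + 1)/2 = (k - 2*M + 1)/2 := by omega
            simp only [ac, ap, aq, if_neg e1, if_neg e2, if_pos h4, if_neg e4, e5, if_neg hk2,
              if_neg hk3, if_pos hk4, if_pos hp]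
          · have e4 : (k+1 - 2*M) % 2 = 1 := by omega
            have e5 : (k+1 - 2*M + 1)/2 = (k - 2*M + 1)/2 + 1 := by omega
            simp only [ac, ap, aq, if_neg e1, if_neg e2, if_pos h4, if_pos e4, e5, if_neg hk2,
              if_neg hk3, if_pos hk4, if_neg hp]
            simp only [← Nat.cast_smul_eq_nsmul ℝ]
            push_cast
            module
        · by_cases h5 : k ≤ 2*M + 2*D
          · have hk : k = 2*M + 2*D := by omega
            have hD : 1 ≤ D := by omega
            have hk2 : ¬ (k < 2*M) := by omega
            have hk3 : ¬ (k = 2*M) := by omega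
            have hp : ¬ ((k - 2*M) % 2 = 1) := by omega
            have e9 : (k - 2*M + 1)/2 = D := by omega
            have e1 : ¬ (k+1 < 2*M) := by omega
            have e2 : ¬ (k+1 = 2*M) := by omega
            have e3 : ¬ (k+1 ≤ 2*M + 2*D) := by omega
            have e4 : k+1 = 2*M + 2*D + 1 := by omega
            have e5 : (k+1 - (2*M + 2*D + 1) + 1)/2 = 0 := by omega
            simp only [ac, ap, aq, if_neg e1, if_neg e2, if_neg e3, if_pos e4, e5, if_neg hk2,
              if_neg hk3, if_pos h5, if_neg hp, e9]
            simp only [← Nat.cast_smul_eq_nsmul ℝ]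
            push_cast
            module
          · have hk2 : ¬ (k < 2*M) := by omega
            have hk3 : ¬ (k = 2*M) := by omega
            have e1 : ¬ (k+1 < 2*M) := by omega
            have e2 : ¬ (k+1 = 2*M) := by omega
            have e3 : ¬ (k+1 ≤ 2*M + 2*D) := by omega
            have e6 : ¬ (k+1 = 2*M + 2*D + 1) := by omega
            by_cases h6 : k = 2*M + 2*D + 1
            · have hp1 : (k+1 - (2*M + 2*D + 1)) % 2 = 1 := by omega
              have e5 : (k+1 - (2*M + 2*D + 1) + 1)/2 = 1 := by omega
              have hp0 : ¬ ((k - (2*M + 2*D + 1)) % 2 = 1) := by omega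
              have e9 : (k - (2*M + 2*D + 1) + 1)/2 = 0 := by omega
              simp only [ac, ap, aq, if_neg e1, if_neg e2, if_neg e3, if_neg e6, if_pos hp1, e5,
                if_neg hk2, if_neg hk3, if_neg h5, if_neg hp0, e9]
              simp only [← Nat.cast_smul_eq_nsmul ℝ]
              push_cast
              module
            · by_cases hp : (k - (2*M + 2*D + 1)) % 2 = 1
              · have hp1 : ¬ ((k+1 - (2*M + 2*D + 1)) % 2 = 1) := by omega
                have e5 : (k+1 - (2*M + 2*D + 1) + 1)/2 = (k - (2*M + 2*D + 1) + 1)/2 := by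
                  omega
                simp only [ac, ap, aq, if_neg e1, if_neg e2, if_neg e3, if_neg e6, if_neg hp1,
                  e5, if_neg hk2, if_neg hk3, if_neg h5, if_pos hp]
              · have hp1 : (k+1 - (2*M + 2*D + 1)) % 2 = 1 := by omega
                have e5 : (k+1 - (2*M + 2*D + 1) + 1)/2 = (k - (2*M + 2*D + 1) + 1)/2 + 1 := by
                  omega
                simp only [ac, ap, aq, if_neg e1, if_neg e2, if_neg e3, if_neg e6, if_pos hp1,
                  e5, if_neg hk2, if_neg hk3, if_neg h5, if_neg hp]
                simp only [← Nat.cast_smul_eq_nsmul ℝ]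
                push_cast
                module

lemma arc_shape (vm vx vy : Euc 3) (M D : ℕ) (k : ℕ) : ∃ (s t : ℝ) (a b : Euc 3),
    ap vm vx vy M D k = s • a ∧ aq vm vx vy M D k = t • b ∧ |s| = 1/2 ∧ |t| = 1/2 ∧
    ((a = vm ∧ b = vx) ∨ (a = vx ∧ b = vm) ∨ (a = vx ∧ b = vy) ∨ (a = vy ∧ b = vx)) := by
  by_cases h1 : k < 2*M
  · by_cases h2 : k % 2 = 0
    · exact ⟨-(1/2), 1/2, vm, vx, by simp [ap, aq, h1, h2], by simp [ap, aq, h1, h2],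
        by norm_num, by norm_num, Or.inl ⟨rfl, rfl⟩⟩
    · exact ⟨-(1/2), 1/2, vx, vm, by simp [ap, aq, h1, h2], by simp [ap, aq, h1, h2],
        by norm_num, by norm_num, Or.inr (Or.inl ⟨rfl, rfl⟩)⟩
  · by_cases h2 : k = 2*M
    · refine ⟨-(1/2), 1/2, vm, vx, ?_, ?_, by norm_num, by norm_num, Or.inl ⟨rfl, rfl⟩⟩
      · simp [ap, h1, h2]
      · have h3 : k ≤ 2*M + 2*D := by omega
        have h4 : (k - 2*M) % 2 = 0 := by omega
        simp [aq, h1, h3, h4]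
    · by_cases h3 : k ≤ 2*M + 2*D
      · by_cases h4 : (k - 2*M) % 2 = 1
        · exact ⟨-(1/2), 1/2, vx, vm, by simp [ap, h1, h2, h3, h4],
            by simp [aq, h1, h3, h4], by norm_num, by norm_num, Or.inr (Or.inl ⟨rfl, rfl⟩)⟩
        · exact ⟨1/2, 1/2, vm, vx, by simp [ap, h1, h2, h3, h4],
            by simp [aq, h1, h3, h4], by norm_num, by norm_num, Or.inl ⟨rfl, rfl⟩⟩
      · by_cases h4 : k = 2*M + 2*D + 1
        · have h5 : (k - (2*M + 2*D + 1)) % 2 = 0 := by omega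
          have e1 : ¬(2*M + 2*D + 1 < 2*M) := by omega
          have e2 : ¬(2*M + 2*D + 1 = 2*M) := by omega
          exact ⟨-(1/2), 1/2, vx, vy, by simp [ap, h1, h2, h3, h4, e1, e2],
            by simp [aq, h1, h3, h5], by norm_num, by norm_num,
            Or.inr (Or.inr (Or.inl ⟨rfl, rfl⟩))⟩
        · by_cases h5 : (k - (2*M + 2*D + 1)) % 2 = 1
          · exact ⟨-(1/2), 1/2, vy, vx, by simp [ap, h1, h2, h3, h4, h5],
              by simp [aq, h1, h3, h5], by norm_num, by norm_num,
              Or.inr (Or.inr (Or.inr ⟨rfl, rfl⟩))⟩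
          · exact ⟨1/2, 1/2, vx, vy, by simp [ap, h1, h2, h3, h4, h5],
              by simp [aq, h1, h3, h5], by norm_num, by norm_num,
              Or.inr (Or.inr (Or.inl ⟨rfl, rfl⟩))⟩

lemma ac_lat (hvm : vm ∈ Lat) (hvx : vx ∈ Lat) (hvy : vy ∈ Lat) (k : ℕ) :
    ac vm vx vy M D k ∈ Lat := by
  have hmx : vm + vx ∈ Lat := Lat.add hvm hvx
  unfold ac
  split_ifs
  · exact Lat.add (Lat.nsmul _ hmx) Lat.zero
  · exact Lat.add (Lat.nsmul _ hmx) hvx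
  · exact Lat.add (Lat.nsmul _ hmx) (Lat.nsmul _ hvx)
  · exact Lat.add (Lat.add (Lat.nsmul _ hmx) (Lat.nsmul _ hvx)) (Lat.nsmul _ hvy)

lemma arc_start : ac vm vx vy M D 0 + ap vm vx vy M D 0 = -((1/2:ℝ) • vm) := by
  by_cases hM : 0 < 2*M
  · have h0 : (0:ℕ) % 2 = 0 := by omega
    simp [ac, ap, hM, h0]
  · have hM0 : M = 0 := by omega
    subst hM0
    norm_num [ac, ap]

lemma arc_end (E : ℕ) :
    ac vm vx vy M D (2*(M+D+1)+2*E) + ap vm vx vy M D (2*(M+D+1)+2*E)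
      = (M:ℝ) • vm + ((M:ℝ) + (D:ℝ) + 1) • vx + ((E:ℝ) + 1/2) • vy := by
  set N := 2*(M+D+1)+2*E with hN
  have e1 : ¬ (N < 2*M) := by omega
  have e2 : ¬ (N = 2*M) := by omega
  have e3 : ¬ (N ≤ 2*M + 2*D) := by omega
  have e4 : ¬ (N = 2*M + 2*D + 1) := by omega
  have e5 : (N - (2*M + 2*D + 1)) % 2 = 1 := by omega
  have e6 : (N - (2*M + 2*D + 1) + 1)/2 = E + 1 := by omega
  simp only [ac, ap, if_neg e1, if_neg e2, if_neg e3, if_neg e4, if_pos e5, e6]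
  simp only [← Nat.cast_smul_eq_nsmul ℝ]
  push_cast
  module

section Norms

variable (hm : ‖vm‖ = 1) (hx : ‖vx‖ = 1) (hy : ‖vy‖ = 1)
  (hmx : ⟪vm, vx⟫ = 0) (hxy : ⟪vx, vy⟫ = 0)

include hm hx hy in
lemma ap_norm (k : ℕ) : ‖ap vm vx vy M D k‖ = 1/2 := by
  obtain ⟨s, t, a, b, hp, hq, hs, ht, hcase⟩ := arc_shape vm vx vy M D k
  have ha : ‖a‖ = 1 := by rcases hcase with ⟨h,_⟩|⟨h,_⟩|⟨h,_⟩|⟨h,_⟩ <;> rw [h] <;> assumption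
  rw [hp, norm_smul, ha, Real.norm_eq_abs, hs]; simp

include hm hx hy in
lemma aq_norm (k : ℕ) : ‖aq vm vx vy M D k‖ = 1/2 := by
  obtain ⟨s, t, a, b, hp, hq, hs, ht, hcase⟩ := arc_shape vm vx vy M D k
  have hb : ‖b‖ = 1 := by rcases hcase with ⟨_,h⟩|⟨_,h⟩|⟨_,h⟩|⟨_,h⟩ <;> rw [h] <;> assumption
  rw [hq, norm_smul, hb, Real.norm_eq_abs, ht]; simp

include hmx hxy in
lemma apq_inner (k : ℕ) : ⟪ap vm vx vy M D k, aq vm vx vy M D k⟫ = 0 := by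
  obtain ⟨s, t, a, b, hp, hq, hs, ht, hcase⟩ := arc_shape vm vx vy M D k
  have hab : ⟪a, b⟫ = 0 := by
    rcases hcase with ⟨h1,h2⟩|⟨h1,h2⟩|⟨h1,h2⟩|⟨h1,h2⟩ <;> rw [h1, h2]
    · exact hmx
    · rw [real_inner_comm]; exact hmx
    · exact hxy
    · rw [real_inner_comm]; exact hxy
  rw [hp, hq, real_inner_smul_left, real_inner_smul_right, hab]
  ring

include hm hx hy hmx hxy in
lemma norm_combo_sq (a b : ℝ) (k : ℕ) :
    ‖a • ap vm vx vy M D k + b • aq vm vx vy M D k‖^2 = (a^2 + b^2)/4 := by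
  rw [norm_add_sq_real, norm_smul, norm_smul, real_inner_smul_left, real_inner_smul_right,
    ap_norm hm hx hy, aq_norm hm hx hy, apq_inner hmx hxy]
  rw [mul_pow, mul_pow]
  simp only [Real.norm_eq_abs, sq_abs]
  ring

end Norms

/-! ### The curve -/

def KK (τ t : ℝ) : ℕ := (⌊t/τ⌋).toNat

def gk (vm vx vy : Euc 3) (M D : ℕ) (ω : ℝ) (k : ℕ) (t : ℝ) : Euc 3 :=
  ω • ((-Real.sin (ω*t - k*(Real.pi/2))) • ap vm vx vy M D k
     + (Real.cos (ω*t - k*(Real.pi/2))) • aq vm vx vy M D k)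

def ad (vm vx vy : Euc 3) (M D : ℕ) (ω τ : ℝ) (t : ℝ) : Euc 3 :=
  gk vm vx vy M D ω (KK τ t) t

def Fk (vm vx vy : Euc 3) (M D : ℕ) (ω : ℝ) (k : ℕ) (t : ℝ) : Euc 3 :=
  ac vm vx vy M D k + Real.cos (ω*t - k*(Real.pi/2)) • ap vm vx vy M D k
    + Real.sin (ω*t - k*(Real.pi/2)) • aq vm vx vy M D k

def uu (vm vx vy : Euc 3) (M D : ℕ) (ω τ : ℝ) (t : ℝ) : Euc 3 :=
  (ac vm vx vy M D 0 + ap vm vx vy M D 0) + ∫ s in (0:ℝ)..t, ad vm vx vy M D ω τ s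

variable {ω τ : ℝ}

lemma Fk_hasDerivAt (k : ℕ) (t : ℝ) :
    HasDerivAt (Fk vm vx vy M D ω k) (gk vm vx vy M D ω k t) t := by
  have hθ : HasDerivAt (fun s : ℝ => ω*s - k*(Real.pi/2)) ω t := by
    simpa using ((hasDerivAt_id t).const_mul ω).sub_const (k*(Real.pi/2))
  have hcos : HasDerivAt (fun s : ℝ => Real.cos (ω*s - k*(Real.pi/2)))
      (-Real.sin (ω*t - k*(Real.pi/2)) * ω) t :=
    (Real.hasDerivAt_cos _).comp t hθ
  have hsin : HasDerivAt (fun s : ℝ => Real.sin (ω*s - k*(Real.pi/2)))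
      (Real.cos (ω*t - k*(Real.pi/2)) * ω) t :=
    (Real.hasDerivAt_sin _).comp t hθ
  have h1 := (hcos.smul_const (ap vm vx vy M D k)).add
    (hsin.smul_const (aq vm vx vy M D k))
  have h2 := ((hasDerivAt_const t (ac vm vx vy M D k)).add h1)
  have hfk : Fk vm vx vy M D ω k = fun s => ac vm vx vy M D k +
      (Real.cos (ω*s - k*(Real.pi/2)) • ap vm vx vy M D k +
        Real.sin (ω*s - k*(Real.pi/2)) • aq vm vx vy M D k) := by
    funext s
    simp only [Fk]
    module
  rw [hfk]
  exact h2.congr_deriv (by simp only [gk]; module)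

lemma gk_cont (k : ℕ) : Continuous (gk vm vx vy M D ω k) := by
  unfold gk
  refine (continuous_const (y := ω)).smul ?_
  apply Continuous.add
  · apply Continuous.fun_smul _ continuous_const
    exact ((Real.continuous_sin.comp ((continuous_const.mul continuous_id).sub
      continuous_const))).neg
  · exact Continuous.fun_smul (Real.continuous_cos.comp ((continuous_const.mul
      continuous_id).sub continuous_const)) continuous_const

lemma KK_measurable : Measurable (KK τ) := by
  apply Measurable.comp (f := fun t : ℝ => ⌊t/τ⌋) (g := Int.toNat)
  · exact fun s _ => trivial
  · exact Int.measurable_floor.comp (measurable_id.div_const τ)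

lemma ad_measurable : Measurable (ad vm vx vy M D ω τ) := by
  have hK : Measurable (KK τ) := KK_measurable
  have hKr : Measurable (fun t => ((KK τ t : ℕ) : ℝ)) :=
    (measurable_from_top (f := (Nat.cast : ℕ → ℝ))).comp hK
  have hθ : Measurable (fun t => ω*t - (KK τ t)*(Real.pi/2)) :=
    (measurable_const.mul measurable_id).sub (hKr.mul measurable_const)
  have hap : Measurable (fun t => ap vm vx vy M D (KK τ t)) :=
    (measurable_from_top (f := ap vm vx vy M D)).comp hK
  have haq : Measurable (fun t => aq vm vx vy M D (KK τ t)) :=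
    (measurable_from_top (f := aq vm vx vy M D)).comp hK
  exact (measurable_const (a := ω)).smul
    ((((Real.measurable_sin.comp hθ).neg).smul hap).add
      ((Real.measurable_cos.comp hθ).smul haq))

lemma KK_eq (hτ : 0 < τ) {k : ℕ} {t : ℝ} (h1 : k*τ ≤ t) (h2 : t < (k+1)*τ) : KK τ t = k := by
  have h3 : (k:ℝ) ≤ t/τ := (le_div_iff₀ hτ).2 (by linarith)
  have h4 : t/τ < (k:ℝ)+1 := (div_lt_iff₀ hτ).2 (by linarith)
  have h5 : ⌊t/τ⌋ = (k:ℤ) := by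
    rw [Int.floor_eq_iff]
    constructor <;> push_cast <;> [exact h3; exact h4]
  simp [KK, h5]

lemma ad_intervalIntegrable (b : ℝ) (hb : ∀ t, ‖ad vm vx vy M D ω τ t‖ ≤ b) (a c : ℝ) :
    IntervalIntegrable (ad vm vx vy M D ω τ) volume a c := by
  rw [intervalIntegrable_iff]
  refine Integrable.mono' (g := fun _ => b) ?_ ad_measurable.aestronglyMeasurable
    (Filter.Eventually.of_forall (fun t => hb t))
  exact integrableOn_const measure_Ioc_lt_top.ne

lemma piece (hτ : 0 < τ) {k : ℕ} {t1 t2 : ℝ} (h1 : k*τ ≤ t1) (h12 : t1 ≤ t2)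
    (h2 : t2 ≤ ((k:ℝ)+1)*τ) :
    ∫ s in t1..t2, ad vm vx vy M D ω τ s
      = Fk vm vx vy M D ω k t2 - Fk vm vx vy M D ω k t1 := by
  have hcongr : ∫ s in t1..t2, ad vm vx vy M D ω τ s
      = ∫ s in t1..t2, gk vm vx vy M D ω k s := by
    apply intervalIntegral.integral_congr_ae
    have hae : ∀ᵐ x ∂(volume : Measure ℝ), x ≠ ((k:ℝ)+1)*τ := by
      rw [MeasureTheory.ae_iff]
      have : {x : ℝ | ¬ x ≠ ((k:ℝ)+1)*τ} = {((k:ℝ)+1)*τ} := by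
        ext x; simp
      rw [this]
      exact Real.volume_singleton
    filter_upwards [hae] with x hx hmem
    rw [Set.uIoc_of_le h12] at hmem
    have hKx : KK τ x = k :=
      KK_eq hτ (le_trans h1 hmem.1.le) (lt_of_le_of_ne (le_trans hmem.2 h2) hx)
    simp [ad, hKx]
  rw [hcongr]
  exact integral_eq_sub_of_hasDerivAt (fun x _ => Fk_hasDerivAt k x)
    ((gk_cont k).intervalIntegrable _ _)

lemma Fk_left (hωτ : ω * τ = Real.pi/2) (k : ℕ) :
    Fk vm vx vy M D ω k ((k:ℝ)*τ) = ac vm vx vy M D k + ap vm vx vy M D k := by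
  have h : ω*((k:ℝ)*τ) - (k:ℝ)*(Real.pi/2) = 0 := by
    rw [show ω*((k:ℝ)*τ) = (k:ℝ)*(ω*τ) from by ring, hωτ]; ring
  simp [Fk, h]

lemma Fk_right (hωτ : ω * τ = Real.pi/2) (k : ℕ) :
    Fk vm vx vy M D ω k (((k:ℝ)+1)*τ)
      = ac vm vx vy M D (k+1) + ap vm vx vy M D (k+1) := by
  have h : ω*(((k:ℝ)+1)*τ) - (k:ℝ)*(Real.pi/2) = Real.pi/2 := by
    rw [show ω*(((k:ℝ)+1)*τ) = ((k:ℝ)+1)*(ω*τ) from by ring, hωτ]; ring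
  simp [Fk, h, chain vm vx vy M D k]

lemma cumul (hτ : 0 < τ) (hωτ : ω * τ = Real.pi/2) (b : ℝ)
    (hb : ∀ t, ‖ad vm vx vy M D ω τ t‖ ≤ b) (k : ℕ) :
    ∫ s in (0:ℝ)..((k:ℝ)*τ), ad vm vx vy M D ω τ s
      = (ac vm vx vy M D k + ap vm vx vy M D k)
        - (ac vm vx vy M D 0 + ap vm vx vy M D 0) := by
  induction k with
  | zero => simp
  | succ n ih =>
    have hadd := integral_add_adjacent_intervals (ad_intervalIntegrable b hb 0 ((n:ℝ)*τ))
      (ad_intervalIntegrable b hb ((n:ℝ)*τ) (((n:ℝ)+1)*τ))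
    have hpiece := piece (vm := vm) (vx := vx) (vy := vy) (M := M) (D := D) (ω := ω) hτ
      (k := n) (t1 := (n:ℝ)*τ) (t2 := ((n:ℝ)+1)*τ) le_rfl
      (by nlinarith) le_rfl
    rw [Fk_left hωτ, Fk_right hωτ] at hpiece
    have hc : ((n:ℝ)+1)*τ = ((n+1 : ℕ):ℝ)*τ := by push_cast; ring
    rw [hc] at hadd hpiece
    rw [← hadd, ih, hpiece]
    abel

lemma uu_eval (hτ : 0 < τ) (hωτ : ω * τ = Real.pi/2) (b : ℝ)
    (hb : ∀ t, ‖ad vm vx vy M D ω τ t‖ ≤ b) {t : ℝ} (ht : 0 ≤ t) :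
    uu vm vx vy M D ω τ t = Fk vm vx vy M D ω (KK τ t) t := by
  set k := KK τ t with hk
  have hnn : (0:ℤ) ≤ ⌊t/τ⌋ := Int.floor_nonneg.2 (div_nonneg ht hτ.le)
  have hck : ((k:ℕ):ℝ) = ((⌊t/τ⌋ : ℤ) : ℝ) := by
    rw [hk, KK]
    have := Int.toNat_of_nonneg hnn
    exact_mod_cast congrArg (fun z : ℤ => (z : ℝ)) this
  have h1 : (k:ℝ)*τ ≤ t := by
    have := Int.floor_le (t/τ)
    rw [← hck] at this
    calc (k:ℝ)*τ ≤ (t/τ)*τ := by nlinarith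
    _ = t := by field_simp
  have h2 : t < ((k:ℝ)+1)*τ := by
    have := Int.lt_floor_add_one (t/τ)
    rw [← hck] at this
    calc t = (t/τ)*τ := by field_simp
    _ < ((k:ℝ)+1)*τ := by nlinarith
  have hadd := integral_add_adjacent_intervals (ad_intervalIntegrable b hb 0 ((k:ℝ)*τ))
    (ad_intervalIntegrable b hb ((k:ℝ)*τ) t)
  have hpiece := piece (vm := vm) (vx := vx) (vy := vy) (M := M) (D := D) (ω := ω) hτ
    (k := k) (t1 := (k:ℝ)*τ) (t2 := t) le_rfl h1 h2.le
  rw [Fk_left hωτ] at hpiece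
  rw [uu, ← hadd, cumul hτ hωτ b hb k, hpiece]
  abel

lemma uu_at_cast (hτ : 0 < τ) (hωτ : ω * τ = Real.pi/2) (b : ℝ)
    (hb : ∀ t, ‖ad vm vx vy M D ω τ t‖ ≤ b) (N : ℕ) :
    uu vm vx vy M D ω τ ((N:ℝ)*τ) = ac vm vx vy M D N + ap vm vx vy M D N := by
  rw [uu, cumul hτ hωτ b hb N]
  abel


/-! ### Core estimate -/

theorem core (vm vx vy : Euc 3) (M D E : ℕ)
    (hm : ‖vm‖ = 1) (hx : ‖vx‖ = 1) (hy : ‖vy‖ = 1)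
    (hmx : ⟪vm, vx⟫ = 0) (hxy : ⟪vx, vy⟫ = 0)
    (hvmL : vm ∈ Lat) (hvxL : vx ∈ Lat) (hvyL : vy ∈ Lat)
    (w : Euc 3) (T : ℝ) (hT : 0 < T)
    (hend : ‖((M:ℝ) • vm + ((M:ℝ)+(D:ℝ)+1) • vx + ((E:ℝ) + 1/2) • vy) - T • w‖
      ≤ Real.sqrt 3) :
    psiT (fun p : Euc 3 => (Metric.infDist p Lat) ^ 2) ((1:ℝ)/4) T w ≤
      ENNReal.ofReal ((((2*(M+D+1)+2*E : ℕ) : ℝ) * Real.pi / (4*T))^2) := by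
  set N : ℕ := 2*(M+D+1)+2*E with hNdef
  have hNpos : 0 < N := by omega
  have hNR : (0:ℝ) < (N:ℝ) := by exact_mod_cast hNpos
  set τ : ℝ := T / N with hτdef
  set ω : ℝ := (N:ℝ) * Real.pi / (2*T) with hωdef
  have hτ : 0 < τ := div_pos hT hNR
  have hωτ : ω * τ = Real.pi / 2 := by
    rw [hωdef, hτdef]
    field_simp
  have hω : 0 ≤ ω := by
    rw [hωdef]
    positivity
  -- exact norm of the derivative
  have had_norm : ∀ t, ‖ad vm vx vy M D ω τ t‖ = ω/2 := by
    intro t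
    rw [ad, gk, norm_smul, Real.norm_eq_abs, abs_of_nonneg hω]
    have h2 : ‖(-Real.sin (ω*t - (KK τ t)*(Real.pi/2))) • ap vm vx vy M D (KK τ t)
        + (Real.cos (ω*t - (KK τ t)*(Real.pi/2))) • aq vm vx vy M D (KK τ t)‖ = 1/2 := by
      apply norm_eq_of_sq (by norm_num)
      rw [norm_combo_sq hm hx hy hmx hxy]
      rw [show (-Real.sin (ω*t - (KK τ t)*(Real.pi/2)))^2
          = Real.sin (ω*t - (KK τ t)*(Real.pi/2))^2 from by ring]
      rw [Real.sin_sq_add_cos_sq]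
      norm_num
    rw [h2]
    ring
  have hb : ∀ t, ‖ad vm vx vy M D ω τ t‖ ≤ ω/2 := fun t => (had_norm t).le
  have hsq3 : (1:ℝ) ≤ Real.sqrt 3 := by
    rw [show (1:ℝ) = Real.sqrt 1 from (Real.sqrt_one).symm]
    exact Real.sqrt_le_sqrt (by norm_num)
  have hTN : (N:ℝ) * τ = T := by
    rw [hτdef]
    field_simp
  -- value of u at time 0
  have hu0 : uu vm vx vy M D ω τ 0 = -((1/2:ℝ) • vm) := by
    rw [uu, intervalIntegral.integral_same, add_zero, arc_start]
  -- value of u at time T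
  have huT : uu vm vx vy M D ω τ T
      = (M:ℝ) • vm + ((M:ℝ)+(D:ℝ)+1) • vx + ((E:ℝ) + 1/2) • vy := by
    rw [← hTN, uu_at_cast hτ hωτ (ω/2) hb N, hNdef, arc_end]
  -- the energy integral
  have henergy : (∫ t in (0:ℝ)..T, ‖ad vm vx vy M D ω τ t‖^2) = T * (ω/2)^2 := by
    have : (fun t => ‖ad vm vx vy M D ω τ t‖^2) = fun _ => (ω/2)^2 := by
      funext t; rw [had_norm t]
    rw [this, intervalIntegral.integral_const, smul_eq_mul, sub_zero]
  -- membership in the admissible set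
  have hmem : ENNReal.ofReal (T * (ω/2)^2) ∈
      {e : ℝ≥0∞ | ∃ u u' : ℝ → Euc 3, IsH1On u u' 0 T ∧
        (∀ t ∈ Set.Icc (0 : ℝ) T,
          (fun p : Euc 3 => (Metric.infDist p Lat) ^ 2) (u t) = (1:ℝ)/4) ∧
        ‖u 0‖ ≤ Real.sqrt ((3:ℕ) : ℝ) ∧ ‖u T - T • w‖ ≤ Real.sqrt ((3:ℕ) : ℝ) ∧
        e = ENNReal.ofReal (∫ t in (0 : ℝ)..T, ‖u' t‖ ^ 2)} := by
    refine ⟨uu vm vx vy M D ω τ, ad vm vx vy M D ω τ, ⟨?_, ?_, ?_⟩, ?_, ?_, ?_, ?_⟩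
    · exact ad_intervalIntegrable (ω/2) hb 0 T
    · have : (fun t => ‖ad vm vx vy M D ω τ t‖^2) = fun _ => (ω/2)^2 := by
        funext t; rw [had_norm t]
      rw [this]
      exact intervalIntegrable_const
    · intro t ht
      rw [show uu vm vx vy M D ω τ 0 = (ac vm vx vy M D 0 + ap vm vx vy M D 0) from by
        rw [uu, intervalIntegral.integral_same, add_zero]]
      rw [uu]
    · intro t ht
      have := uu_eval hτ hωτ (ω/2) hb ht.1
      rw [this]
      have hFk : Fk vm vx vy M D ω (KK τ t) t = ac vm vx vy M D (KK τ t) +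
          (Real.cos (ω*t - (KK τ t)*(Real.pi/2)) • ap vm vx vy M D (KK τ t) +
           Real.sin (ω*t - (KK τ t)*(Real.pi/2)) • aq vm vx vy M D (KK τ t)) := by
        rw [Fk]; module
      rw [hFk]
      have hrn : ‖Real.cos (ω*t - (KK τ t)*(Real.pi/2)) • ap vm vx vy M D (KK τ t) +
           Real.sin (ω*t - (KK τ t)*(Real.pi/2)) • aq vm vx vy M D (KK τ t)‖ = 1/2 := by
        apply norm_eq_of_sq (by norm_num)
        rw [norm_combo_sq hm hx hy hmx hxy, Real.cos_sq_add_sin_sq]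
        norm_num
      simp only []
      rw [infDist_eq_half (ac_lat hvmL hvxL hvyL _) hrn]
      norm_num
    · rw [hu0]
      have : ‖-((1/2:ℝ) • vm)‖ = 1/2 := by
        rw [norm_neg, norm_smul, hm, Real.norm_eq_abs]
        norm_num
      rw [this]
      have : Real.sqrt ((3:ℕ):ℝ) = Real.sqrt 3 := by norm_num
      rw [this]
      linarith
    · rw [huT]
      have : Real.sqrt ((3:ℕ):ℝ) = Real.sqrt 3 := by norm_num
      rw [this]
      exact hend
    · rw [henergy]
  -- conclude
  rw [psiT]
  calc ENNReal.ofReal (1/T) * sInf _ ≤ ENNReal.ofReal (1/T) * ENNReal.ofReal (T * (ω/2)^2) :=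
        mul_le_mul_right (sInf_le hmem) _
  _ = ENNReal.ofReal ((1/T) * (T * (ω/2)^2)) := by
        rw [← ENNReal.ofReal_mul (show (0:ℝ) ≤ 1/T by positivity)]
  _ = ENNReal.ofReal (((N:ℝ) * Real.pi / (4*T))^2) := by
        congr 1
        rw [hωdef]
        field_simp
        ring


lemma norm_triple {u v z : Euc 3} (hu : ‖u‖ = 1) (hv : ‖v‖ = 1) (hz : ‖z‖ = 1)
    (huv : ⟪u,v⟫ = 0) (hvz : ⟪v,z⟫ = 0) (huz : ⟪u,z⟫ = 0) (a b c : ℝ) :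
    ‖a•u + b•v + c•z‖^2 = a^2 + b^2 + c^2 := by
  have h1 : ⟪a•u + b•v, c•z⟫ = 0 := by
    rw [inner_add_left, real_inner_smul_left, real_inner_smul_left,
      real_inner_smul_right, real_inner_smul_right, hvz, huz]
    ring
  have h2 : ⟪a•u, b•v⟫ = 0 := by
    rw [real_inner_smul_left, real_inner_smul_right, huv]; ring
  rw [norm_add_sq_real, h1, norm_add_sq_real, h2, norm_smul, norm_smul, norm_smul,
    hu, hv, hz]
  simp only [Real.norm_eq_abs, mul_one]
  rw [sq_abs, sq_abs, sq_abs]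
  ring

theorem master (w vm vx vy : Euc 3) (am axx ay : ℝ)
    (ham : 0 ≤ am) (hax : 0 ≤ axx) (hay : 0 ≤ ay) (hmax : am ≤ axx)
    (hm : ‖vm‖ = 1) (hx : ‖vx‖ = 1) (hy : ‖vy‖ = 1)
    (hmx : ⟪vm, vx⟫ = 0) (hxy : ⟪vx, vy⟫ = 0) (hmy : ⟪vm, vy⟫ = 0)
    (hvmL : vm ∈ Lat) (hvxL : vx ∈ Lat) (hvyL : vy ∈ Lat)
    (hw : w = am • vm + axx • vx + ay • vy)
    (T : ℝ) (hT : 1 ≤ T) :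
    psiT (fun p : Euc 3 => (Metric.infDist p Lat) ^ 2) ((1:ℝ)/4) T w ≤
      ENNReal.ofReal ((Real.pi/2*(axx+ay) + 3*Real.pi/(4*T))^2) := by
  have hT0 : (0:ℝ) < T := lt_of_lt_of_le one_pos hT
  obtain ⟨M, hM1, hM2⟩ : ∃ M : ℕ, (M:ℝ) ≤ am*T + 1/2 ∧ am*T + 1/2 < (M:ℝ) + 1 :=
    ⟨⌊am*T + 1/2⌋₊, Nat.floor_le (by positivity), Nat.lt_floor_add_one _⟩
  obtain ⟨R, hR1, hR2⟩ : ∃ R : ℕ, (R:ℝ) ≤ axx*T + 1/2 ∧ axx*T + 1/2 < (R:ℝ) + 1 :=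
    ⟨⌊axx*T + 1/2⌋₊, Nat.floor_le (by positivity), Nat.lt_floor_add_one _⟩
  obtain ⟨E, hE1, hE2⟩ : ∃ E : ℕ, (E:ℝ) ≤ ay*T ∧ ay*T < (E:ℝ) + 1 :=
    ⟨⌊ay*T⌋₊, Nat.floor_le (by positivity), Nat.lt_floor_add_one _⟩
  obtain ⟨AX, D, hAX, hAXmax⟩ : ∃ AX D : ℕ, M + D + 1 = AX ∧ AX = max (M+1) R :=
    ⟨max (M+1) R, max (M+1) R - M - 1, by have := le_max_left (M+1) R; omega, rfl⟩
  have hAXub : (AX:ℝ) ≤ axx*T + 3/2 := by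
    rcases le_total (M+1) R with h|h
    · have h' : AX = R := by rw [hAXmax]; exact max_eq_right h
      rw [h']
      linarith
    · have h' : AX = M+1 := by rw [hAXmax]; exact max_eq_left h
      rw [h']
      push_cast
      nlinarith
  have hAXlb : axx*T - 1/2 ≤ (AX:ℝ) := by
    have h1 : (R:ℝ) ≤ (AX:ℝ) := by
      have : R ≤ AX := by rw [hAXmax]; exact le_max_right (M+1) R
      exact_mod_cast this
    linarith
  have hMDAX : (M:ℝ)+(D:ℝ)+1 = (AX:ℝ) := by exact_mod_cast hAX
  have hend : ‖((M:ℝ) • vm + ((M:ℝ)+(D:ℝ)+1) • vx + ((E:ℝ) + 1/2) • vy) - T • w‖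
      ≤ Real.sqrt 3 := by
    have hdiff : ((M:ℝ) • vm + ((M:ℝ)+(D:ℝ)+1) • vx + ((E:ℝ) + 1/2) • vy) - T • w
        = ((M:ℝ) - am*T)•vm + ((AX:ℝ) - axx*T)•vx + (((E:ℝ)+1/2) - ay*T)•vy := by
      rw [hw, hMDAX]
      module
    have s1 : ((M:ℝ) - am*T)^2 ≤ (1/2)^2 := sq_le_sq' (by linarith) (by linarith)
    have s2 : ((AX:ℝ) - axx*T)^2 ≤ (3/2)^2 := sq_le_sq' (by linarith) (by linarith)
    have s3 : (((E:ℝ)+1/2) - ay*T)^2 ≤ (1/2)^2 := sq_le_sq' (by linarith) (by linarith)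
    have h9 : ‖((M:ℝ) • vm + ((M:ℝ)+(D:ℝ)+1) • vx + ((E:ℝ) + 1/2) • vy) - T • w‖^2 ≤ 3 := by
      rw [hdiff, norm_triple hm hx hy hmx hxy hmy]
      nlinarith
    rw [← Real.sqrt_sq (norm_nonneg _)]
    exact Real.sqrt_le_sqrt h9
  have hNle : ((2*(M+D+1)+2*E : ℕ):ℝ) ≤ 2*(axx+ay)*T + 3 := by
    have hcast : ((2*(M+D+1)+2*E : ℕ):ℝ) = 2*((M:ℝ)+(D:ℝ)+1)+2*(E:ℝ) := by
      push_cast; ring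
    rw [hcast, hMDAX]
    linarith [hAXub, hE1]
  have hbase1 : (0:ℝ) ≤ ((2*(M+D+1)+2*E : ℕ):ℝ) * Real.pi / (4*T) := by positivity
  have hbase2 : ((2*(M+D+1)+2*E : ℕ):ℝ) * Real.pi / (4*T)
      ≤ Real.pi/2*(axx+ay) + 3*Real.pi/(4*T) := by
    have heq : (2*(axx+ay)*T + 3) * Real.pi / (4*T) = Real.pi/2*(axx+ay) + 3*Real.pi/(4*T) := by
      field_simp
      ring
    rw [← heq]
    exact (div_le_div_iff_of_pos_right (by linarith)).2 (mul_le_mul_of_nonneg_right hNle Real.pi_pos.le)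
  exact le_trans (core vm vx vy M D E hm hx hy hmx hxy hvmL hvxL hvyL w T hT0 hend)
    (ENNReal.ofReal_le_ofReal (pow_le_pow_left₀ hbase1 hbase2 2))

theorem final_via (w vm vx vy : Euc 3) (am axx ay : ℝ)
    (ham : 0 ≤ am) (hax : 0 ≤ axx) (hay : 0 ≤ ay) (hmax : am ≤ axx)
    (hm : ‖vm‖ = 1) (hx : ‖vx‖ = 1) (hy : ‖vy‖ = 1)
    (hmx : ⟪vm, vx⟫ = 0) (hxy : ⟪vx, vy⟫ = 0) (hmy : ⟪vm, vy⟫ = 0)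
    (hvmL : vm ∈ Lat) (hvxL : vx ∈ Lat) (hvyL : vy ∈ Lat)
    (hw : w = am • vm + axx • vx + ay • vy) :
    Filter.limsup
      (fun T : ℝ => psiT (fun p : Euc 3 => (Metric.infDist p Lat) ^ 2) ((1:ℝ)/4) T w)
      Filter.atTop ≤ ENNReal.ofReal ((Real.pi/2)^2 * (axx+ay)^2) := by
  have hev : ∀ᶠ T in (Filter.atTop : Filter ℝ),
      psiT (fun p : Euc 3 => (Metric.infDist p Lat) ^ 2) ((1:ℝ)/4) T w ≤
        ENNReal.ofReal ((Real.pi/2*(axx+ay) + 3*Real.pi/(4*T))^2) :=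
    (Filter.eventually_ge_atTop 1).mono (fun T hT =>
      master w vm vx vy am axx ay ham hax hay hmax hm hx hy hmx hxy hmy
        hvmL hvxL hvyL hw T hT)
  refine le_trans (Filter.limsup_le_limsup hev) ?_
  have htend : Filter.Tendsto
      (fun T : ℝ => ENNReal.ofReal ((Real.pi/2*(axx+ay) + 3*Real.pi/(4*T))^2))
      Filter.atTop (nhds (ENNReal.ofReal ((Real.pi/2*(axx+ay))^2))) := by
    apply (ENNReal.continuous_ofReal.tendsto _).comp
    have h1 : Filter.Tendsto (fun T : ℝ => 3*Real.pi/(4*T)) Filter.atTop (nhds 0) := by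
      apply Filter.Tendsto.div_atTop tendsto_const_nhds
      exact Filter.Tendsto.const_mul_atTop (by norm_num) tendsto_id
    have h2 : Filter.Tendsto (fun T : ℝ => Real.pi/2*(axx+ay) + 3*Real.pi/(4*T))
        Filter.atTop (nhds (Real.pi/2*(axx+ay))) := by
      simpa using tendsto_const_nhds.add h1
    simpa using h2.pow 2
  rw [htend.limsup_eq]
  exact le_of_eq (congrArg _ (by ring))

end Ex54

/-- Example 5.4: for `φ(p) = dist²(p, ℤ³)` one has the upper bound
`limsup_T ψ_T^{1/4}(w) ≤ (π/2)²·(max(μ, |w₁|+|w₂|+|w₃|−μ))²`,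
with `μ = min(|w₁|,|w₂|,|w₃|)`. -/
theorem psiT_limsup_dist_lattice_3d (w : Euc 3) :
    Filter.limsup
      (fun T : ℝ => psiT
        (fun p : Euc 3 =>
          (Metric.infDist p {q : Euc 3 | ∀ i : Fin 3, ∃ k : ℤ, q i = (k : ℝ)}) ^ 2)
        ((1 : ℝ) / 4) T w)
      Filter.atTop ≤
    ENNReal.ofReal ((Real.pi / 2) ^ 2 *
      (max (min (min |w 0| |w 1|) |w 2|)
        (|w 0| + |w 1| + |w 2| - min (min |w 0| |w 1|) |w 2|)) ^ 2) := by
  classical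
  have hsets : {q : Euc 3 | ∀ i : Fin 3, ∃ k : ℤ, q i = (k : ℝ)} = Ex54.Lat := rfl
  rw [hsets]
  set a := |w 0| with hadef
  set b := |w 1| with hbdef
  set c := |w 2| with hcdef
  have ha : 0 ≤ a := abs_nonneg _
  have hb : 0 ≤ b := abs_nonneg _
  have hc : 0 ≤ c := abs_nonneg _
  set V : Fin 3 → Euc 3 := fun i =>
    if 0 ≤ w i then EuclideanSpace.single i (1:ℝ) else -EuclideanSpace.single i (1:ℝ) with hV
  have hVnorm : ∀ i, ‖V i‖ = 1 := by
    intro i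
    rw [hV]
    by_cases h : 0 ≤ w i <;> simp [h, EuclideanSpace.norm_single]
  have hVlat : ∀ i, V i ∈ Ex54.Lat := by
    intro i
    have hs : EuclideanSpace.single i (1:ℝ) ∈ Ex54.Lat := by
      intro j
      by_cases hji : j = i
      · exact ⟨1, by simp [EuclideanSpace.single_apply, hji]⟩
      · exact ⟨0, by simp [EuclideanSpace.single_apply, hji]⟩
    rw [hV]
    by_cases h : 0 ≤ w i
    · simpa [h] using hs
    · simpa [h] using Ex54.Lat.neg hs
  have hVinner : ∀ i j, i ≠ j → (inner ℝ (V i) (V j) : ℝ) = 0 := by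
    intro i j hij
    have hs : (inner ℝ (EuclideanSpace.single i (1:ℝ)) (EuclideanSpace.single j (1:ℝ)) : ℝ)
        = 0 := by
      rw [EuclideanSpace.inner_single_left]
      simp [EuclideanSpace.single_apply, hij]
    rw [hV]
    by_cases h : 0 ≤ w i <;> by_cases h' : 0 ≤ w j <;>
      simp [h, h', inner_neg_left, inner_neg_right, hs]
  have habs : ∀ i, |w i| • V i = w i • EuclideanSpace.single i (1:ℝ) := by
    intro i
    rw [hV]
    by_cases h : 0 ≤ w i
    · simp only [h, if_true]
      rw [abs_of_nonneg h]
    · simp only [h, if_false]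
      rw [abs_of_neg (not_le.1 h), smul_neg, ← neg_smul, neg_neg]
  have hrepr : w = w 0 • EuclideanSpace.single (0:Fin 3) (1:ℝ)
      + w 1 • EuclideanSpace.single (1:Fin 3) (1:ℝ)
      + w 2 • EuclideanSpace.single (2:Fin 3) (1:ℝ) := by
    ext i
    fin_cases i <;>
      simp [EuclideanSpace.single_apply]
  by_cases h1 : a ≤ b
  · by_cases h2 : a ≤ c
    · -- a is the min
      have hw : w = a • V 0 + b • V 1 + c • V 2 := by
        rw [hadef, hbdef, hcdef, habs 0, habs 1, habs 2]
        exact hrepr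
      have key := Ex54.final_via w (V 0) (V 1) (V 2) a b c ha hb hc h1
        (hVnorm 0) (hVnorm 1) (hVnorm 2)
        (hVinner 0 1 (by decide)) (hVinner 1 2 (by decide)) (hVinner 0 2 (by decide))
        (hVlat 0) (hVlat 1) (hVlat 2) hw
      have hmin : min (min a b) c = a := by
        rw [min_eq_left h1, min_eq_left h2]
      rw [hmin, show a + b + c - a = b + c from by ring,
        max_eq_right (by linarith : a ≤ b + c)]
      exact key
    · -- c is the min (c < a ≤ b)
      have hca : c ≤ a := le_of_lt (not_le.1 h2)
      have hw : w = c • V 2 + a • V 0 + b • V 1 := by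
        rw [hadef, hbdef, hcdef, habs 0, habs 1, habs 2]
        conv_lhs => rw [hrepr]
        module
      have key := Ex54.final_via w (V 2) (V 0) (V 1) c a b hc ha hb hca
        (hVnorm 2) (hVnorm 0) (hVnorm 1)
        (hVinner 2 0 (by decide)) (hVinner 0 1 (by decide)) (hVinner 2 1 (by decide))
        (hVlat 2) (hVlat 0) (hVlat 1) hw
      have hmin : min (min a b) c = c := by
        rw [min_eq_left h1, min_eq_right hca]
      rw [hmin, show a + b + c - c = a + b from by ring,
        max_eq_right (by linarith : c ≤ a + b)]
      exact key
  · by_cases h3 : b ≤ c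
    · -- b is the min
      have hba : b ≤ a := le_of_lt (not_le.1 h1)
      have hw : w = b • V 1 + a • V 0 + c • V 2 := by
        rw [hadef, hbdef, hcdef, habs 0, habs 1, habs 2]
        conv_lhs => rw [hrepr]
        module
      have key := Ex54.final_via w (V 1) (V 0) (V 2) b a c hb ha hc hba
        (hVnorm 1) (hVnorm 0) (hVnorm 2)
        (hVinner 1 0 (by decide)) (hVinner 0 2 (by decide)) (hVinner 1 2 (by decide))
        (hVlat 1) (hVlat 0) (hVlat 2) hw
      have hmin : min (min a b) c = b := by
        rw [min_eq_right hba, min_eq_left h3]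
      rw [hmin, show a + b + c - b = a + c from by ring,
        max_eq_right (by linarith : b ≤ a + c)]
      exact key
    · -- c is the min (c < b < a)
      have hcb : c ≤ b := le_of_lt (not_le.1 h3)
      have hba : b ≤ a := le_of_lt (not_le.1 h1)
      have hca : c ≤ a := le_trans hcb hba
      have hw : w = c • V 2 + a • V 0 + b • V 1 := by
        rw [hadef, hbdef, hcdef, habs 0, habs 1, habs 2]
        conv_lhs => rw [hrepr]
        module
      have key := Ex54.final_via w (V 2) (V 0) (V 1) c a b hc ha hb hca
        (hVnorm 2) (hVnorm 0) (hVnorm 1)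
        (hVinner 2 0 (by decide)) (hVinner 0 1 (by decide)) (hVinner 2 1 (by decide))
        (hVlat 2) (hVlat 0) (hVlat 1) hw
      have hmin : min (min a b) c = c := by
        rw [min_eq_right hba, min_eq_right hcb]
      rw [hmin, show a + b + c - c = a + b from by ring,
        max_eq_right (by linarith : c ≤ a + b)]
      exact key
end
end
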